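/- arXiv:1606.05380 — 3 statements merged into one kernel-verified Lean document; each statement's English description precedes it below -/
import Mathlib

section
/- Let Γ be a strongly regular graph with a partition of its vertex set into two parts X and Y such that (I) the subgraph induced on X is regular, and (II) every vertex in Y is adjacent to exactly 0, |X|/2, or |X| vertices of X. Define Γ' on the same vertex set by keeping all edges except that each vertex R in Y with exactly |X|/2 neighbours in X has those edges deleted and is instead joined to the other |X|/2 vertices of X. Then Γ' is a strongly regular graph with the same parameters (v,k,λ,μ) as Γ. -/
section Defs

variable {K V : Type*} [Field K] [AddCommGroup V] [Module K V]

/-- A submodule is totally singular for `Q` if `Q` vanishes on it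
(i.e. the corresponding projective subspace is contained in the quadric). -/
def totallySingular (Q : QuadraticForm K V) (W : Submodule K V) : Prop :=
  ∀ v ∈ W, Q v = 0

/-- The quadric defined by `Q` is non-singular: no nonzero singular vector lies
in the radical of the polar form. -/
def quadricNonsingular (Q : QuadraticForm K V) : Prop :=
  ∀ v : V, v ≠ 0 → Q v = 0 → ∃ w : V, QuadraticMap.polar ⇑Q v w ≠ 0

/-- The quadric of `Q` has projective index `g`: it contains a projective subspace of
dimension `g` and none of larger dimension. -/
def projIndex (Q : QuadraticForm K V) (g : ℕ) : Prop :=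
  (∃ W : Submodule K V, totallySingular Q W ∧ Module.finrank K W = g + 1) ∧
  ∀ W : Submodule K V, totallySingular Q W → Module.finrank K W ≤ g + 1

/-- A generator: a `g`-dimensional projective subspace contained in the quadric. -/
def isGenerator (Q : QuadraticForm K V) (g : ℕ) (W : Submodule K V) : Prop :=
  totallySingular Q W ∧ Module.finrank K W = g + 1

/-- The points of the quadric, as projective points. -/
abbrev QuadricPoint (Q : QuadraticForm K V) :=
  {p : Projectivization K V // Q p.rep = 0}

/-- The point-graph of the quadric: two points are adjacent when the line joining them
is contained in the quadric. -/
def pointGraph (Q : QuadraticForm K V) : SimpleGraph (QuadricPoint Q) where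
  Adj p q := p ≠ q ∧ totallySingular Q (p.1.submodule ⊔ q.1.submodule)
  symm := by
    constructor
    rintro p q ⟨h1, h2⟩
    exact ⟨h1.symm, by rwa [sup_comm]⟩
  loopless := by constructor; rintro p ⟨h1, -⟩; exact h1 rfl

/-- Type (ii) points relative to `α`: points outside `α` lying in an
`(s+1)`-space of the quadric through `α`. -/
def typeII (Q : QuadraticForm K V) (α : Submodule K V) (p : QuadricPoint Q) : Prop :=
  p.1.rep ∉ α ∧ totallySingular Q (α ⊔ p.1.submodule)

/-- Type (iii) points relative to `α`: the remaining points outside `α`. -/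
def typeIII (Q : QuadraticForm K V) (α : Submodule K V) (p : QuadricPoint Q) : Prop :=
  p.1.rep ∉ α ∧ ¬ totallySingular Q (α ⊔ p.1.submodule)

/-- A pair of points, one of type (ii), the other of type (iii). -/
def mixedPair (Q : QuadraticForm K V) (α : Submodule K V) (p q : QuadricPoint Q) : Prop :=
  (typeII Q α p ∧ typeIII Q α q) ∨ (typeII Q α q ∧ typeIII Q α p)

lemma mixedPair_comm (Q : QuadraticForm K V) (α : Submodule K V) (p q : QuadricPoint Q) :
    mixedPair Q α p q ↔ mixedPair Q α q p := by
  unfold mixedPair; exact or_comm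

/-- The line joining `p` and `q` is a 2-secant: it meets the quadric in exactly two points. -/
def secant2 (Q : QuadraticForm K V) (p q : QuadricPoint Q) : Prop :=
  {x : Projectivization K V | x.rep ∈ p.1.submodule ⊔ q.1.submodule ∧ Q x.rep = 0}.ncard = 2

lemma secant2_comm (Q : QuadraticForm K V) (p q : QuadricPoint Q) :
    secant2 Q p q ↔ secant2 Q q p := by
  unfold secant2; rw [sup_comm]

/-- The switched graph `Γ_s`: same as the point-graph, except that a type (ii) point and a
type (iii) point are adjacent iff their joining line is a 2-secant of the quadric. -/
def gammaS (Q : QuadraticForm K V) (α : Submodule K V) : SimpleGraph (QuadricPoint Q) where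
  Adj p q := p ≠ q ∧ (mixedPair Q α p q → secant2 Q p q) ∧
    (¬ mixedPair Q α p q → totallySingular Q (p.1.submodule ⊔ q.1.submodule))
  symm := by
    constructor
    rintro p q ⟨h1, h2, h3⟩
    refine ⟨h1.symm, fun h => (secant2_comm Q p q).mp (h2 ((mixedPair_comm Q α q p).mp h)),
      fun h => ?_⟩
    have := h3 (fun hx => h ((mixedPair_comm Q α p q).mp hx))
    rwa [sup_comm]
  loopless := by constructor; rintro p ⟨h1, -⟩; exact h1 rfl

/-- `v` has exactly half of the vertices of `X` as neighbours. -/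
def halfIn {Ω : Type*} (G : SimpleGraph Ω) (X : Set Ω) (v : Ω) : Prop :=
  2 * (X ∩ G.neighborSet v).ncard = X.ncard

/-- The Godsil–McKay switch of `G` with respect to the part `X`: every vertex outside `X`
having exactly half of `X` as neighbours has its edges to `X` complemented. -/
def gmSwitch {Ω : Type*} (G : SimpleGraph Ω) (X : Set Ω) : SimpleGraph Ω where
  Adj v w :=
    (((v ∈ X ∧ w ∉ X ∧ halfIn G X w) ∨ (w ∈ X ∧ v ∉ X ∧ halfIn G X v)) ∧
        ¬ G.Adj v w ∧ v ≠ w) ∨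
    (¬ ((v ∈ X ∧ w ∉ X ∧ halfIn G X w) ∨ (w ∈ X ∧ v ∉ X ∧ halfIn G X v)) ∧ G.Adj v w)
  symm := by
    constructor
    rintro v w (⟨h1, h2, h3⟩ | ⟨h1, h2⟩)
    · exact Or.inl ⟨h1.symm, fun h => h2 h.symm, h3.symm⟩
    · exact Or.inr ⟨fun h => h1 h.symm, h2.symm⟩
  loopless := by
    constructor
    rintro v (⟨h1, h2, h3⟩ | ⟨h1, h2⟩)
    · exact h3 rfl
    · exact G.loopless.irrefl v h2

noncomputable instance {K V : Type*} [Field K] [AddCommGroup V] [Module K V] [Finite V]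
    (Q : QuadraticForm K V) : Fintype (QuadricPoint Q) := by
  have : Finite (Projectivization K V) := Quotient.finite _
  exact Fintype.ofFinite _

end Defs


section GMAux

open SimpleGraph Finset Matrix

variable {Ω : Type*} [Fintype Ω] [DecidableEq Ω]

lemma aux_isSRGWith_of_matrix (G : SimpleGraph Ω)
    [DecidableRel G.Adj] (v k l m : ℕ) (hcard : Fintype.card Ω = v)
    (h : G.adjMatrix ℚ ^ 2 =
      k • (1 : Matrix Ω Ω ℚ) + l • G.adjMatrix ℚ + m • Gᶜ.adjMatrix ℚ) :
    G.IsSRGWith v k l m := by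
  rw [← Nat.cast_smul_eq_nsmul ℚ k, ← Nat.cast_smul_eq_nsmul ℚ l,
    ← Nat.cast_smul_eq_nsmul ℚ m] at h
  have entry : ∀ x y : Ω, (G.adjMatrix ℚ ^ 2) x y
      = (Fintype.card (G.commonNeighbors x y) : ℚ) := by
    intro x y
    rw [adjMatrix_pow_apply_eq_card_walk]
    congr 1
    exact Fintype.card_congr (G.walkLengthTwoEquivCommonNeighbors x y)
  constructor
  · exact hcard
  · intro x
    have h2 := congrFun (congrFun h x) x
    rw [entry] at h2
    simp only [Matrix.add_apply, Matrix.smul_apply, Matrix.one_apply_eq, adjMatrix_apply,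
      SimpleGraph.irrefl, if_false, compl_adj, ne_eq, not_true_eq_false, false_and, smul_zero,
      add_zero, smul_eq_mul, mul_one] at h2
    have h3 : Fintype.card (G.commonNeighbors x x) = k := by exact_mod_cast h2
    rw [← h3, ← card_neighborSet_eq_degree]
    exact Fintype.card_congr (Equiv.setCongr (by simp [commonNeighbors]))
  · intro x y hxy
    have h2 := congrFun (congrFun h x) y
    rw [entry] at h2
    have hne : x ≠ y := hxy.ne
    simp only [Matrix.add_apply, Matrix.smul_apply, Matrix.one_apply_ne hne, adjMatrix_apply,
      hxy, if_true, compl_adj, ne_eq, hne, not_true_eq_false, not_false_eq_true, true_and,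
      not_true, and_false, if_false, smul_zero, smul_eq_mul, mul_one, mul_zero, add_zero,
      zero_add] at h2
    exact_mod_cast h2
  · intro x y hne hxy
    have h2 := congrFun (congrFun h x) y
    rw [entry] at h2
    simp only [Matrix.add_apply, Matrix.smul_apply, Matrix.one_apply_ne hne, adjMatrix_apply,
      hxy, if_false, compl_adj, ne_eq, hne, not_false_eq_true, true_and, and_self, if_true,
      smul_zero, smul_eq_mul, mul_one, mul_zero, add_zero, zero_add] at h2
    exact_mod_cast h2

open scoped Classical in
noncomputable def swQ (X : Set Ω) : Matrix Ω Ω ℚ := Matrix.of fun a b =>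
  (if a ∈ X ∧ b ∈ X then 2 / (X.ncard : ℚ) else 0) + (if a = b then 1 else 0)
    - (if a ∈ X ∧ a = b then 2 else 0)

set_option linter.unusedSectionVars false

open scoped Classical in
lemma swQ_symm (X : Set Ω) (a b : Ω) : swQ X a b = swQ X b a := by
  unfold swQ
  simp only [Matrix.of_apply]
  by_cases h : a = b
  · subst h; simp
  · simp [h, Ne.symm h, and_comm]

open scoped Classical in
lemma swQ_mul_apply (X : Set Ω) (M : Matrix Ω Ω ℚ) (a b : Ω) :
    (swQ X * M) a b =
      (if a ∈ X then 2 / (X.ncard : ℚ) * ∑ c ∈ univ.filter (· ∈ X), M c b else 0) + M a b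
        - (if a ∈ X then 2 * M a b else 0) := by
  have h1 : ∑ c, (if a ∈ X ∧ c ∈ X then 2 / (X.ncard : ℚ) else 0) * M c b =
      (if a ∈ X then 2 / (X.ncard : ℚ) * ∑ c ∈ univ.filter (· ∈ X), M c b else 0) := by
    by_cases ha : a ∈ X
    · simp only [ha, true_and, if_true, ite_mul, zero_mul]
      rw [Finset.mul_sum, ← Finset.sum_filter]
    · simp [ha]
  have h2 : ∑ c, (if a = c then (1 : ℚ) else 0) * M c b = M a b := by
    simp [ite_mul, Finset.sum_ite_eq]
  have h3 : ∑ c, (if a ∈ X ∧ a = c then (2 : ℚ) else 0) * M c b =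
      (if a ∈ X then 2 * M a b else 0) := by
    by_cases ha : a ∈ X
    · simp [ha, ite_mul, Finset.sum_ite_eq]
    · simp [ha]
  simp only [Matrix.mul_apply, swQ, Matrix.of_apply, sub_mul, add_mul,
    Finset.sum_sub_distrib, Finset.sum_add_distrib, h1, h2, h3]

open scoped Classical in
lemma mul_swQ_apply (X : Set Ω) (M : Matrix Ω Ω ℚ) (a b : Ω) :
    (M * swQ X) a b =
      (if b ∈ X then 2 / (X.ncard : ℚ) * ∑ c ∈ univ.filter (· ∈ X), M a c else 0) + M a b
        - (if b ∈ X then 2 * M a b else 0) := by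
  have : (M * swQ X) a b = (swQ X * Mᵀ) b a := by
    rw [Matrix.mul_apply, Matrix.mul_apply]
    exact Finset.sum_congr rfl fun c _ => by rw [Matrix.transpose_apply, swQ_symm, mul_comm]
  rw [this, swQ_mul_apply]
  simp [Matrix.transpose_apply]

open scoped Classical in
lemma filter_X_card (X : Set Ω) : (univ.filter (· ∈ X)).card = X.ncard := by
  rw [← Set.ncard_coe_finset]
  congr 1
  ext c
  simp

open scoped Classical in
lemma swQ_colsum (X : Set Ω) (hn : (X.ncard : ℚ) ≠ 0) (b : Ω) :
    ∑ c ∈ univ.filter (· ∈ X), swQ X c b = if b ∈ X then 1 else 0 := by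
  unfold swQ
  simp only [Matrix.of_apply, Finset.sum_sub_distrib, Finset.sum_add_distrib]
  by_cases hb : b ∈ X
  · have e1 : ∑ c ∈ univ.filter (· ∈ X), (if c ∈ X ∧ b ∈ X then 2 / (X.ncard : ℚ) else 0)
        = (X.ncard : ℚ) * (2 / (X.ncard : ℚ)) := by
      have hterm : ∀ c ∈ univ.filter (· ∈ X),
          (if c ∈ X ∧ b ∈ X then 2 / (X.ncard : ℚ) else 0) = 2 / (X.ncard : ℚ) := by
        intro c hc
        simp only [Finset.mem_filter] at hc
        simp [hc.2, hb]
      rw [Finset.sum_congr rfl hterm, Finset.sum_const, filter_X_card X, nsmul_eq_mul]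
    have e2 : ∑ c ∈ univ.filter (· ∈ X), (if c = b then (1 : ℚ) else 0) = 1 := by
      rw [Finset.sum_ite_eq' (univ.filter (· ∈ X)) b (fun _ => (1 : ℚ))]
      simp [hb]
    have e3 : ∑ c ∈ univ.filter (· ∈ X), (if c ∈ X ∧ c = b then (2 : ℚ) else 0) = 2 := by
      have : ∀ c ∈ univ.filter (· ∈ X), (if c ∈ X ∧ c = b then (2 : ℚ) else 0)
          = (if c = b then (2 : ℚ) else 0) := by
        intro c hc
        simp only [Finset.mem_filter] at hc
        simp [hc.2]
      rw [Finset.sum_congr rfl this, Finset.sum_ite_eq' (univ.filter (· ∈ X)) b (fun _ => (2 : ℚ))]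
      simp [hb]
    rw [e1, e2, e3, if_pos hb]
    field_simp
    norm_num
  · have e1 : ∑ c ∈ univ.filter (· ∈ X),
        (if c ∈ X ∧ b ∈ X then 2 / (X.ncard : ℚ) else 0) = 0 := by
      simp [hb]
    have e2 : ∑ c ∈ univ.filter (· ∈ X), (if c = b then (1 : ℚ) else 0) = 0 := by
      rw [Finset.sum_ite_eq' (univ.filter (· ∈ X)) b (fun _ => (1 : ℚ))]
      simp [hb]
    have e3 : ∑ c ∈ univ.filter (· ∈ X), (if c ∈ X ∧ c = b then (2 : ℚ) else 0) = 0 := by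
      apply Finset.sum_eq_zero
      intro c hc
      have : ¬(c ∈ X ∧ c = b) := by rintro ⟨h1, rfl⟩; exact hb h1
      simp [this]
    rw [e1, e2, e3]
    simp [hb]

open scoped Classical in
lemma swQ_mul_swQ (X : Set Ω) (hn : (X.ncard : ℚ) ≠ 0) : swQ X * swQ X = 1 := by
  ext a b
  rw [swQ_mul_apply, swQ_colsum X hn]
  unfold swQ
  simp only [Matrix.of_apply, Matrix.one_apply]
  by_cases ha : a ∈ X <;> by_cases hb : b ∈ X <;> by_cases hab : a = b
  · subst hab; simp [ha]; ring
  · simp [ha, hb, hab]; ring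
  · exact absurd (hab ▸ ha) hb
  · simp [ha, hb, hab]
  · exact absurd (hab ▸ hb) ha
  · simp [ha, hb, hab]
  · subst hab; simp [ha]
  · simp [ha, hb, hab]

noncomputable def Jmat (Ω : Type*) : Matrix Ω Ω ℚ := Matrix.of fun _ _ => 1

open scoped Classical in
lemma swQ_mul_J (X : Set Ω) (hn : (X.ncard : ℚ) ≠ 0) : swQ X * Jmat Ω = Jmat Ω := by
  ext a b
  rw [swQ_mul_apply]
  simp only [Jmat, Matrix.of_apply, Finset.sum_const, filter_X_card X, nsmul_eq_mul, mul_one]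
  by_cases ha : a ∈ X
  · simp only [ha, if_true]
    field_simp
    norm_num
  · simp [ha]

open scoped Classical in
lemma J_mul_swQ (X : Set Ω) (hn : (X.ncard : ℚ) ≠ 0) : Jmat Ω * swQ X = Jmat Ω := by
  ext a b
  rw [mul_swQ_apply]
  simp only [Jmat, Matrix.of_apply, Finset.sum_const, filter_X_card X, nsmul_eq_mul, mul_one]
  by_cases hb : b ∈ X
  · simp only [hb, if_true]
    field_simp
    norm_num
  · simp [hb]

lemma compl_adjMatrix_eq (H : SimpleGraph Ω) [DecidableRel H.Adj] :
    Hᶜ.adjMatrix ℚ = Jmat Ω - 1 - H.adjMatrix ℚ := by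
  ext a b
  simp only [adjMatrix_apply, compl_adj, Jmat, Matrix.sub_apply, Matrix.of_apply,
    Matrix.one_apply, ne_eq]
  by_cases hab : a = b
  · subst hab; simp
  · by_cases hadj : H.Adj a b <;> simp [hab, hadj]

open scoped Classical in
lemma sum_adj_col (G : SimpleGraph Ω) [DecidableRel G.Adj] (X : Set Ω) (b : Ω) :
    ∑ c ∈ univ.filter (· ∈ X), G.adjMatrix ℚ c b = ((X ∩ G.neighborSet b).ncard : ℚ) := by
  have hset : X ∩ G.neighborSet b = ↑((univ.filter (· ∈ X)).filter (fun c => G.Adj c b)) := by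
    ext c
    simp [Set.mem_inter_iff, mem_neighborSet, adj_comm]
  rw [hset, Set.ncard_coe_finset]
  rw [Finset.card_filter, Nat.cast_sum]
  exact Finset.sum_congr rfl fun c _ => by by_cases h : G.Adj c b <;> simp [h]

open scoped Classical in
lemma sum_adj_row (G : SimpleGraph Ω) [DecidableRel G.Adj] (X : Set Ω) (a : Ω) :
    ∑ c ∈ univ.filter (· ∈ X), G.adjMatrix ℚ a c = ((X ∩ G.neighborSet a).ncard : ℚ) := by
  rw [← sum_adj_col G X a]
  exact Finset.sum_congr rfl fun c _ => by simp [adjMatrix_apply, G.adj_comm]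

open scoped Classical in
lemma swQ_conj (G : SimpleGraph Ω) [DecidableRel G.Adj] (X : Set Ω)
    (hn : (X.ncard : ℚ) ≠ 0) {d : ℕ} (hreg : ∀ v ∈ X, (X ∩ G.neighborSet v).ncard = d)
    (hY : ∀ v ∉ X, (X ∩ G.neighborSet v).ncard = 0 ∨ halfIn G X v ∨
      (X ∩ G.neighborSet v).ncard = X.ncard)
    [DecidableRel (gmSwitch G X).Adj] :
    swQ X * G.adjMatrix ℚ * swQ X = (gmSwitch G X).adjMatrix ℚ := by
  have hnnat : X.ncard ≠ 0 := fun h => hn (by rw [h]; simp)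
  have step1 : ∀ a b : Ω, (swQ X * G.adjMatrix ℚ) a b =
      if a ∈ X then 2 / (X.ncard : ℚ) * ((X ∩ G.neighborSet b).ncard : ℚ) - G.adjMatrix ℚ a b
      else G.adjMatrix ℚ a b := by
    intro a b
    rw [swQ_mul_apply, sum_adj_col]
    by_cases ha : a ∈ X
    · rw [if_pos ha, if_pos ha, if_pos ha]; ring
    · rw [if_neg ha, if_neg ha, if_neg ha]; ring
  have hrowsum : ∀ a : Ω, ∑ c ∈ univ.filter (· ∈ X), (swQ X * G.adjMatrix ℚ) a c =
      if a ∈ X then (d : ℚ) else ((X ∩ G.neighborSet a).ncard : ℚ) := by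
    intro a
    by_cases ha : a ∈ X
    · simp only [ha, if_true]
      have hterm : ∀ c ∈ univ.filter (· ∈ X), (swQ X * G.adjMatrix ℚ) a c
          = 2 / (X.ncard : ℚ) * (d : ℚ) - G.adjMatrix ℚ a c := by
        intro c hc
        simp only [Finset.mem_filter] at hc
        rw [step1, if_pos ha, hreg c hc.2]
      rw [Finset.sum_congr rfl hterm, Finset.sum_sub_distrib, Finset.sum_const,
        filter_X_card X, sum_adj_row, hreg a ha, nsmul_eq_mul]
      field_simp
      ring
    · simp only [ha, if_false]
      rw [Finset.sum_congr rfl (fun c _ => by rw [step1, if_neg ha]), sum_adj_row]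
  ext a b
  rw [mul_swQ_apply, hrowsum, step1]
  simp only [adjMatrix_apply]
  by_cases ha : a ∈ X <;> by_cases hb : b ∈ X
  · -- both in X
    have hsb : (X ∩ G.neighborSet b).ncard = d := hreg b hb
    have hadj : (gmSwitch G X).Adj a b ↔ G.Adj a b := by
      constructor
      · rintro (⟨(⟨_, hb', _⟩ | ⟨_, ha', _⟩), _, _⟩ | ⟨_, h⟩)
        exacts [absurd hb hb', absurd ha ha', h]
      · intro h
        exact Or.inr ⟨by rintro (⟨_, hb', _⟩ | ⟨_, ha', _⟩); exacts [hb' hb, ha' ha], h⟩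
    rw [if_congr hadj rfl rfl, hsb, hreg a ha]
    simp only [ha, hb, if_true]
    ring
  · -- a ∈ X, b ∉ X
    simp only [ha, hb, if_true, if_false]
    rcases hY b hb with h0 | hhalf | hfull
    · have hempty : X ∩ G.neighborSet b = ∅ :=
        (Set.ncard_eq_zero (X.toFinite.inter_of_left _)).mp h0
      have hnotadj : ¬ G.Adj a b := by
        intro h
        have hmem : a ∈ X ∩ G.neighborSet b := ⟨ha, h.symm⟩
        rw [hempty] at hmem
        exact hmem
      have hnothalf : ¬ halfIn G X b := by
        intro hh
        unfold halfIn at hh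
        rw [h0, Nat.mul_zero] at hh
        exact hnnat hh.symm
      have hadj : ¬ (gmSwitch G X).Adj a b := by
        rintro (⟨(⟨_, _, hh⟩ | ⟨hb', _, _⟩), _, _⟩ | ⟨_, h⟩)
        exacts [hnothalf hh, hb hb', hnotadj h]
      rw [if_neg hadj, if_neg hnotadj, h0]
      norm_num
    · have h2s : (2 : ℚ) * ((X ∩ G.neighborSet b).ncard : ℚ) = (X.ncard : ℚ) := by
        exact_mod_cast congrArg (Nat.cast (R := ℚ)) hhalf
      have hone : 2 / (X.ncard : ℚ) * ((X ∩ G.neighborSet b).ncard : ℚ) = 1 := by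
        field_simp
        linarith
      have hne : a ≠ b := fun h => hb (h ▸ ha)
      have hadj : (gmSwitch G X).Adj a b ↔ ¬ G.Adj a b := by
        constructor
        · rintro (⟨_, hna, _⟩ | ⟨hc, _⟩)
          · exact hna
          · exact absurd (Or.inl ⟨ha, hb, hhalf⟩) hc
        · intro hna
          exact Or.inl ⟨Or.inl ⟨ha, hb, hhalf⟩, hna, hne⟩
      rw [if_congr hadj rfl rfl, hone]
      by_cases h : G.Adj a b <;> simp [h]
    · have hXsub : X ∩ G.neighborSet b = X :=
        Set.eq_of_subset_of_ncard_le Set.inter_subset_left hfull.ge X.toFinite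
      have hadjG : G.Adj a b := by
        have hmem : a ∈ X ∩ G.neighborSet b := by rw [hXsub]; exact ha
        exact hmem.2.symm
      have hnothalf : ¬ halfIn G X b := by
        intro hh
        unfold halfIn at hh
        rw [hfull] at hh
        omega
      have hadj : (gmSwitch G X).Adj a b :=
        Or.inr ⟨by rintro (⟨_, _, hh⟩ | ⟨hb', _, _⟩); exacts [hnothalf hh, hb hb'], hadjG⟩
      rw [if_pos hadj, if_pos hadjG, hfull]
      field_simp
      norm_num
  · -- a ∉ X, b ∈ X
    simp only [ha, hb, if_true, if_false]
    rcases hY a ha with h0 | hhalf | hfull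
    · have hempty : X ∩ G.neighborSet a = ∅ :=
        (Set.ncard_eq_zero (X.toFinite.inter_of_left _)).mp h0
      have hnotadj : ¬ G.Adj a b := by
        intro h
        have hmem : b ∈ X ∩ G.neighborSet a := ⟨hb, h⟩
        rw [hempty] at hmem
        exact hmem
      have hnothalf : ¬ halfIn G X a := by
        intro hh
        unfold halfIn at hh
        rw [h0, Nat.mul_zero] at hh
        exact hnnat hh.symm
      have hadj : ¬ (gmSwitch G X).Adj a b := by
        rintro (⟨(⟨ha', _, _⟩ | ⟨_, _, hh⟩), _, _⟩ | ⟨_, h⟩)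
        exacts [ha ha', hnothalf hh, hnotadj h]
      rw [if_neg hadj, if_neg hnotadj, h0]
      norm_num
    · have h2s : (2 : ℚ) * ((X ∩ G.neighborSet a).ncard : ℚ) = (X.ncard : ℚ) := by
        exact_mod_cast congrArg (Nat.cast (R := ℚ)) hhalf
      have hone : 2 / (X.ncard : ℚ) * ((X ∩ G.neighborSet a).ncard : ℚ) = 1 := by
        field_simp
        linarith
      have hne : a ≠ b := fun h => ha (h ▸ hb)
      have hadj : (gmSwitch G X).Adj a b ↔ ¬ G.Adj a b := by
        constructor
        · rintro (⟨_, hna, _⟩ | ⟨hc, _⟩)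
          · exact hna
          · exact absurd (Or.inr ⟨hb, ha, hhalf⟩) hc
        · intro hna
          exact Or.inl ⟨Or.inr ⟨hb, ha, hhalf⟩, hna, hne⟩
      rw [if_congr hadj rfl rfl, hone]
      by_cases h : G.Adj a b <;> simp [h] <;> ring
    · have hXsub : X ∩ G.neighborSet a = X :=
        Set.eq_of_subset_of_ncard_le Set.inter_subset_left hfull.ge X.toFinite
      have hadjG : G.Adj a b := by
        have hmem : b ∈ X ∩ G.neighborSet a := by rw [hXsub]; exact hb
        exact hmem.2
      have hnothalf : ¬ halfIn G X a := by
        intro hh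
        unfold halfIn at hh
        rw [hfull] at hh
        omega
      have hadj : (gmSwitch G X).Adj a b :=
        Or.inr ⟨by rintro (⟨ha', _, _⟩ | ⟨_, _, hh⟩); exacts [ha ha', hnothalf hh], hadjG⟩
      rw [if_pos hadj, if_pos hadjG, hfull]
      field_simp
      norm_num
  · -- neither
    have hadj : (gmSwitch G X).Adj a b ↔ G.Adj a b := by
      constructor
      · rintro (⟨(⟨ha', _⟩ | ⟨hb', _⟩), _, _⟩ | ⟨_, h⟩)
        exacts [absurd ha' ha, absurd hb' hb, h]
      · intro h
        exact Or.inr ⟨by rintro (⟨ha', _⟩ | ⟨hb', _⟩); exacts [ha ha', hb hb'], h⟩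
    rw [if_congr hadj rfl rfl]
    simp only [ha, hb, if_false]
    ring

end GMAux

/- **Statement 0** (Godsil–McKay switching for strongly regular graphs). -/
open scoped Classical in
theorem godsilMcKay_switch_isSRG {Ω : Type*} [Fintype Ω] (G : SimpleGraph Ω) (X : Set Ω)
    (hreg : ∃ d : ℕ, ∀ v ∈ X, (X ∩ G.neighborSet v).ncard = d)
    (hY : ∀ v ∉ X, (X ∩ G.neighborSet v).ncard = 0 ∨ halfIn G X v ∨
      (X ∩ G.neighborSet v).ncard = X.ncard)
    (v k l m : ℕ) (hG : G.IsSRGWith v k l m) :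
    (gmSwitch G X).IsSRGWith v k l m := by
  classical
  by_cases hXe : X = ∅
  · have hEq : gmSwitch G X = G := by
      subst hXe
      ext a b
      simp [gmSwitch]
    rw [hEq]
    convert hG
  · obtain ⟨d, hreg⟩ := hreg
    have hnnat : X.ncard ≠ 0 := fun h => hXe ((Set.ncard_eq_zero X.toFinite).mp h)
    have hn : (X.ncard : ℚ) ≠ 0 := Nat.cast_ne_zero.mpr hnnat
    have hQAQ := swQ_conj G X hn hreg hY
    apply aux_isSRGWith_of_matrix _ v k l m hG.card
    have hmat := hG.matrix_eq (α := ℚ)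
    have hsq : (gmSwitch G X).adjMatrix ℚ ^ 2
        = swQ X * (G.adjMatrix ℚ * G.adjMatrix ℚ) * swQ X := by
      rw [← hQAQ, pow_two]
      simp only [Matrix.mul_assoc]
      rw [← Matrix.mul_assoc (swQ X) (swQ X) (G.adjMatrix ℚ * swQ X), swQ_mul_swQ X hn,
        Matrix.one_mul]
    rw [hsq, ← pow_two, hmat, compl_adjMatrix_eq G, compl_adjMatrix_eq (gmSwitch G X), ← hQAQ]
    simp only [Matrix.mul_add, Matrix.add_mul, Matrix.mul_sub, Matrix.sub_mul,
      Matrix.mul_smul, Matrix.smul_mul, swQ_mul_swQ X hn, swQ_mul_J X hn, J_mul_swQ X hn,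
      Matrix.mul_one, Matrix.one_mul]
end

section
/- If a graph Γ' is cospectral with (has the same adjacency-matrix spectrum as) a connected strongly regular graph Γ with parameters (v,k,λ,μ) where 0 < k < v−1, then Γ' is also strongly regular with the same parameters (v,k,λ,μ). -/
/- **Statement 1**: a graph cospectral with a connected strongly regular graph with
parameters `(v,k,λ,μ)`, `0 < k < v - 1`, is strongly regular with the same parameters. -/
section Helpers

open Polynomial Matrix

variable {n : Type*} [Fintype n] [DecidableEq n]

/-- Conjugation by a unitary matrix as an algebra homomorphism. -/
noncomputable def conjAH (U : Matrix n n ℝ) (h1 : U * star U = 1) (h2 : star U * U = 1) :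
    Matrix n n ℝ →ₐ[ℝ] Matrix n n ℝ where
  toFun M := U * M * star U
  map_one' := by show U * 1 * star U = 1; rw [mul_one, h1]
  map_mul' M N := by
    show U * (M * N) * star U = U * M * star U * (U * N * star U)
    simp only [mul_assoc]
    rw [← mul_assoc (star U) U, h2, one_mul]
  map_zero' := by simp
  map_add' M N := by
    simp only [Matrix.mul_add, Matrix.add_mul]
  commutes' r := by
    simp only [Algebra.algebraMap_eq_smul_one, Matrix.mul_smul, Matrix.smul_mul, mul_one, h1]

lemma aeval_diag (d : n → ℝ) (f : ℝ[X]) :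
    Polynomial.aeval (Matrix.diagonal d) f = Matrix.diagonal (fun i => f.eval (d i)) := by
  have h1 : Matrix.diagonal d = Matrix.diagonalAlgHom ℝ d := rfl
  rw [h1, Polynomial.aeval_algHom_apply]
  have h3 : Polynomial.aeval d f = fun i => f.eval (d i) := by
    funext i
    have h2 : Polynomial.aeval ((Pi.evalAlgHom ℝ (fun _ : n => ℝ) i) d) f
        = (Pi.evalAlgHom ℝ (fun _ : n => ℝ) i) (Polynomial.aeval d f) :=
      Polynomial.aeval_algHom_apply _ _ _
    have h4 : (Polynomial.aeval d f) i = Polynomial.aeval (d i) f := h2.symm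
    rw [h4]
    rw [Polynomial.coe_aeval_eq_eval]
  rw [h3]
  rfl

lemma aeval_herm {M : Matrix n n ℝ} (hM : M.IsHermitian) (f : ℝ[X]) :
    Polynomial.aeval M f =
      (hM.eigenvectorUnitary : Matrix n n ℝ) *
        Matrix.diagonal (fun i => f.eval (hM.eigenvalues i)) *
        star (hM.eigenvectorUnitary : Matrix n n ℝ) := by
  set U := (hM.eigenvectorUnitary : Matrix n n ℝ) with hU
  have h1 : U * star U = 1 := Matrix.mem_unitaryGroup_iff.mp hM.eigenvectorUnitary.2
  have h2 : star U * U = 1 := Matrix.mem_unitaryGroup_iff'.mp hM.eigenvectorUnitary.2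
  have key : M = conjAH U h1 h2 (Matrix.diagonal hM.eigenvalues) := by
    have hst := hM.spectral_theorem
    simp only [RCLike.ofReal_real_eq_id, Function.id_comp] at hst
    exact hst
  conv_lhs => rw [key]
  rw [Polynomial.aeval_algHom_apply, aeval_diag]
  rfl

lemma trace_aeval {M : Matrix n n ℝ} (hM : M.IsHermitian) (f : ℝ[X]) :
    (Polynomial.aeval M f).trace = ∑ i, f.eval (hM.eigenvalues i) := by
  set U := (hM.eigenvectorUnitary : Matrix n n ℝ) with hU
  have h2 : star U * U = 1 := Matrix.mem_unitaryGroup_iff'.mp hM.eigenvectorUnitary.2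
  rw [aeval_herm hM f, Matrix.trace_mul_cycle, h2, one_mul, Matrix.trace_diagonal]

lemma aeval_eq_zero_of_eval {M : Matrix n n ℝ} (hM : M.IsHermitian) (f : ℝ[X])
    (h : ∀ i, f.eval (hM.eigenvalues i) = 0) : Polynomial.aeval M f = 0 := by
  rw [aeval_herm hM f]
  have : Matrix.diagonal (fun i => f.eval (hM.eigenvalues i)) = 0 := by
    have : (fun i => f.eval (hM.eigenvalues i)) = fun _ => (0 : ℝ) := funext h
    rw [this, Matrix.diagonal_zero]
  rw [this, Matrix.mul_zero, Matrix.zero_mul]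

lemma eval_eq_zero_of_aeval {M : Matrix n n ℝ} (hM : M.IsHermitian) (f : ℝ[X])
    (h : Polynomial.aeval M f = 0) : ∀ i, f.eval (hM.eigenvalues i) = 0 := by
  set U := (hM.eigenvectorUnitary : Matrix n n ℝ) with hU
  have h1 : U * star U = 1 := Matrix.mem_unitaryGroup_iff.mp hM.eigenvectorUnitary.2
  have h2 : star U * U = 1 := Matrix.mem_unitaryGroup_iff'.mp hM.eigenvectorUnitary.2
  have key := aeval_herm hM f
  rw [h, ← hU] at key
  have hD : Matrix.diagonal (fun i => f.eval (hM.eigenvalues i)) = 0 := by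
    have e : star U * (U * Matrix.diagonal (fun i => f.eval (hM.eigenvalues i)) * star U) * U
        = (star U * U) * Matrix.diagonal (fun i => f.eval (hM.eigenvalues i)) * (star U * U) := by
      noncomm_ring
    rw [h2, one_mul, mul_one] at e
    rw [← e, ← key]
    simp
  intro i
  have := congrFun (congrFun hD i) i
  simpa using this

lemma psd_aeval {M : Matrix n n ℝ} (hM : M.IsHermitian) (f : ℝ[X])
    (h : ∀ i, 0 ≤ f.eval (hM.eigenvalues i)) : (Polynomial.aeval M f).PosSemidef := by
  rw [aeval_herm hM f]
  have hd : (Matrix.diagonal (fun i => f.eval (hM.eigenvalues i))).PosSemidef :=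
    Matrix.posSemidef_diagonal_iff.mpr h
  have := hd.mul_mul_conjTranspose_same (hM.eigenvectorUnitary : Matrix n n ℝ)
  rwa [← Matrix.star_eq_conjTranspose] at this

lemma charpoly_diag (d : n → ℝ) :
    (Matrix.diagonal d).charpoly = ∏ i, (X - C (d i)) := by
  unfold Matrix.charpoly
  have : charmatrix (Matrix.diagonal d) = Matrix.diagonal (fun i => X - C (d i)) := by
    ext i j
    by_cases h : i = j
    · subst h; simp
    · rw [charmatrix_apply_ne _ _ _ h, Matrix.diagonal_apply_ne _ h,
        Matrix.diagonal_apply_ne _ h]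
      simp
  rw [this, Matrix.det_diagonal]

lemma charpoly_conj_unitary (U D : Matrix n n ℝ) (h1 : U * star U = 1) :
    (U * D * star U).charpoly = D.charpoly := by
  unfold Matrix.charpoly
  have key : charmatrix (U * D * star U) =
      (C : ℝ →+* ℝ[X]).mapMatrix U * charmatrix D * (C : ℝ →+* ℝ[X]).mapMatrix (star U) := by
    unfold charmatrix
    rw [Matrix.mul_sub, Matrix.sub_mul]
    congr 1
    · -- mapU * scalar X * mapU' = scalar X
      have hs : (C : ℝ →+* ℝ[X]).mapMatrix U * Matrix.scalar n (X : ℝ[X]) =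
          Matrix.scalar n (X : ℝ[X]) * (C : ℝ →+* ℝ[X]).mapMatrix U :=
        (Matrix.scalar_commute (X : ℝ[X]) (fun r => Commute.all _ r) _).symm
      rw [hs, mul_assoc, ← _root_.map_mul ((C : ℝ →+* ℝ[X]).mapMatrix), h1,
        _root_.map_one, mul_one]
    · rw [← _root_.map_mul ((C : ℝ →+* ℝ[X]).mapMatrix),
        ← _root_.map_mul ((C : ℝ →+* ℝ[X]).mapMatrix)]
  rw [key, Matrix.det_mul, Matrix.det_mul]
  rw [mul_comm ((C : ℝ →+* ℝ[X]).mapMatrix U).det _, mul_assoc, ← Matrix.det_mul,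
    ← _root_.map_mul ((C : ℝ →+* ℝ[X]).mapMatrix), h1, _root_.map_one, Matrix.det_one, mul_one]

lemma charpoly_herm {M : Matrix n n ℝ} (hM : M.IsHermitian) :
    M.charpoly = ∏ i, (X - C (hM.eigenvalues i)) := by
  set U := (hM.eigenvectorUnitary : Matrix n n ℝ) with hU
  have h1 : U * star U = 1 := Matrix.mem_unitaryGroup_iff.mp hM.eigenvectorUnitary.2
  have key : M = U * Matrix.diagonal hM.eigenvalues * star U := by
    have hst := hM.spectral_theorem
    simp only [RCLike.ofReal_real_eq_id, Function.id_comp] at hst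
    exact hst
  conv_lhs => rw [key]
  rw [charpoly_conj_unitary _ _ h1, charpoly_diag]

end Helpers

section MainProof
open Polynomial Matrix

set_option maxHeartbeats 1600000 in
open scoped Classical in
theorem isSRG_of_cospectral {Ω : Type*} [Fintype Ω] (G G' : SimpleGraph Ω)
    (v k l m : ℕ) (hG : G.IsSRGWith v k l m) (hconn : G.Connected)
    (hk0 : 0 < k) (hk1 : k < v - 1)
    (hspec : (G.adjMatrix ℝ).charpoly = (G'.adjMatrix ℝ).charpoly) :
    G'.IsSRGWith v k l m := by
  classical
  set A := G.adjMatrix ℝ with hAdef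
  set B := G'.adjMatrix ℝ with hBdef
  have hA : A.IsHermitian := by
    rw [Matrix.IsHermitian, Matrix.conjTranspose_eq_transpose_of_trivial]
    exact G.isSymm_adjMatrix
  have hB : B.IsHermitian := by
    rw [Matrix.IsHermitian, Matrix.conjTranspose_eq_transpose_of_trivial]
    exact G'.isSymm_adjMatrix
  have cardΩ : Fintype.card Ω = v := hG.card
  have hv : k + 2 ≤ v := by omega
  have hΩ : Nonempty Ω := by
    rw [← Fintype.card_pos_iff, cardΩ]; omega
  -- l + 1 ≤ k
  have hl : l + 1 ≤ k := by
    obtain ⟨x⟩ := hΩ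
    have hdx : 0 < G.degree x := by rw [hG.regular x]; exact hk0
    obtain ⟨y, hxy⟩ := G.degree_pos_iff_exists_adj x |>.mp hdx
    have hlt := hxy.card_commonNeighbors_lt_degree
    rw [hG.regular x, hG.of_adj x y hxy] at hlt
    omega
  have hparam := SimpleGraph.IsSRGWith.param_eq G hG (by omega : 0 < v)
  have qk : (k:ℝ)^2 + ((m:ℝ) - l)*k + ((m:ℝ) - k) = m * v := by
    have h1 : ((k * (k - l - 1) : ℕ) : ℝ) = (((v - k - 1) * m : ℕ) : ℝ) := by
      exact_mod_cast congrArg (Nat.cast : ℕ → ℝ) hparam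
    rw [Nat.cast_mul, Nat.cast_mul, Nat.cast_sub (by omega : 1 ≤ k - l),
      Nat.cast_sub (by omega : l ≤ k), Nat.cast_sub (by omega : 1 ≤ v - k),
      Nat.cast_sub (by omega : k ≤ v)] at h1
    push_cast at h1
    linear_combination h1
  set J : Matrix Ω Ω ℝ := Matrix.of (fun _ _ : Ω => (1:ℝ)) with hJdef
  set q : ℝ[X] := X^2 + C ((m:ℝ) - l) * X + C ((m:ℝ) - k) with hqdef
  set p : ℝ[X] := (X - C (k:ℝ)) * q with hpdef
  have hqeval : ∀ M : Matrix Ω Ω ℝ, Polynomial.aeval M q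
      = M*M + ((m:ℝ)-l)•M + ((m:ℝ)-k)•(1:Matrix Ω Ω ℝ) := by
    intro M
    rw [hqdef]
    simp only [map_add, _root_.map_mul, map_pow, Polynomial.aeval_X, Polynomial.aeval_C,
      Algebra.algebraMap_eq_smul_one, pow_two, smul_mul_assoc, one_mul]
  have hqevalR : ∀ θ:ℝ, q.eval θ = θ^2 + ((m:ℝ)-l)*θ + ((m:ℝ)-k) := by
    intro θ; rw [hqdef]; simp
  have hAJ : A * J = (k:ℝ) • J := by
    ext i j
    rw [hAdef, SimpleGraph.adjMatrix_mul_apply]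
    simp [hJdef, hG.regular i]
  have hcompl : (Gᶜ.adjMatrix ℝ) = J - 1 - A := by
    ext i j
    by_cases h : i = j
    · subst h
      simp [hJdef, hAdef, Matrix.one_apply]
    · by_cases ha : G.Adj i j <;>
        simp [hJdef, hAdef, Matrix.one_apply, SimpleGraph.compl_adj, h, ha]
  have he2 : A * A = (k:ℝ)•(1:Matrix Ω Ω ℝ) + (l:ℝ)•A + (m:ℝ)•(J - 1 - A) := by
    have h := hG.matrix_eq (α := ℝ)
    rw [pow_two, hcompl] at h
    rw [← Nat.cast_smul_eq_nsmul ℝ k, ← Nat.cast_smul_eq_nsmul ℝ l,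
      ← Nat.cast_smul_eq_nsmul ℝ m] at h
    exact h
  have hqA : Polynomial.aeval A q = (m:ℝ) • J := by
    rw [hqeval A, he2]; module
  have hpA : Polynomial.aeval A p = 0 := by
    have h1 : Polynomial.aeval A p = (A - (k:ℝ)•(1:Matrix Ω Ω ℝ)) * Polynomial.aeval A q := by
      rw [hpdef]
      simp only [_root_.map_mul, map_sub, Polynomial.aeval_X, Polynomial.aeval_C,
        Algebra.algebraMap_eq_smul_one]
    rw [h1, hqA, Matrix.sub_mul, Matrix.mul_smul, hAJ, smul_mul_assoc, Matrix.one_mul,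
      smul_smul, smul_smul, mul_comm, sub_self]
  -- multiset of eigenvalues coincide
  have hms : (Finset.univ.val.map hA.eigenvalues) = (Finset.univ.val.map hB.eigenvalues) := by
    have e1 : ((Finset.univ.val.map hA.eigenvalues).map (fun a => X - C a)).prod
        = A.charpoly := by
      rw [charpoly_herm hA, Finset.prod_eq_multiset_prod, Multiset.map_map]
      rfl
    have e2 : ((Finset.univ.val.map hB.eigenvalues).map (fun a => X - C a)).prod
        = B.charpoly := by
      rw [charpoly_herm hB, Finset.prod_eq_multiset_prod, Multiset.map_map]
      rfl
    calc Finset.univ.val.map hA.eigenvalues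
        = (((Finset.univ.val.map hA.eigenvalues).map (fun a => X - C a)).prod).roots :=
          (Polynomial.roots_multiset_prod_X_sub_C _).symm
      _ = (((Finset.univ.val.map hB.eigenvalues).map (fun a => X - C a)).prod).roots := by
          rw [e1, e2]; rw [hAdef, hBdef]; rw [hspec]
      _ = Finset.univ.val.map hB.eigenvalues := Polynomial.roots_multiset_prod_X_sub_C _
  have hsum : ∀ f : ℝ → ℝ, ∑ i, f (hB.eigenvalues i) = ∑ i, f (hA.eigenvalues i) := by
    intro f
    have e : ∀ (g : Ω → ℝ), Finset.univ.val.map (fun i => f (g i))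
        = (Finset.univ.val.map g).map f := by
      intro g; rw [Multiset.map_map]; rfl
    rw [Finset.sum_eq_multiset_sum, Finset.sum_eq_multiset_sum, e, e, hms]
  have hmem : ∀ i, ∃ j, hB.eigenvalues i = hA.eigenvalues j := by
    intro i
    have h : hB.eigenvalues i ∈ Finset.univ.val.map hB.eigenvalues :=
      Multiset.mem_map_of_mem _ (Finset.mem_val.mpr (Finset.mem_univ i))
    rw [← hms] at h
    obtain ⟨j, _, hj⟩ := Multiset.mem_map.mp h
    exact ⟨j, hj.symm⟩
  have hrootB : ∀ i, p.eval (hB.eigenvalues i) = 0 := by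
    intro i; obtain ⟨j, hj⟩ := hmem i; rw [hj]
    exact eval_eq_zero_of_aeval hA p hpA j
  have hqk : q.eval (k:ℝ) = (m:ℝ) * v := by rw [hqevalR]; linarith [qk]
  have hlR : (l:ℝ) + 1 ≤ (k:ℝ) := by exact_mod_cast hl
  have hbound : ∀ i, hB.eigenvalues i ≤ (k:ℝ) ∧ 0 ≤ q.eval (hB.eigenvalues i) := by
    intro i
    have h := hrootB i
    rw [hpdef, Polynomial.eval_mul, Polynomial.eval_sub, Polynomial.eval_X,
      Polynomial.eval_C, mul_eq_zero] at h
    rcases h with h | h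
    · have hek : hB.eigenvalues i = k := by linarith
      exact ⟨le_of_eq hek, by rw [hek, hqk]; positivity⟩
    · refine ⟨?_, le_of_eq h.symm⟩
      rw [hqevalR] at h
      set θ := hB.eigenvalues i
      by_cases hθ : θ ≤ 0
      · have hk0' : (0:ℝ) ≤ k := Nat.cast_nonneg k
        linarith
      · push_neg at hθ
        by_contra hgt
        push_neg at hgt
        have hm0 : (0:ℝ) ≤ m := Nat.cast_nonneg m
        nlinarith [mul_pos (by linarith : (0:ℝ) < θ - k) (by linarith : (0:ℝ) < θ + 1),
          mul_nonneg hm0 hθ.le, mul_nonneg (by linarith : (0:ℝ) ≤ (k:ℝ) - l - 1) hθ.le]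
  -- traces
  have htrA2 : (A*A).trace = (v:ℝ) * k := by
    have hdiag : ∀ i, (A*A) i i = (k:ℝ) := by
      intro i
      rw [hAdef, SimpleGraph.adjMatrix_mul_self_apply_self, hG.regular i]
    rw [Matrix.trace]
    simp only [Matrix.diag]
    rw [Finset.sum_congr rfl (fun i _ => hdiag i), Finset.sum_const, Finset.card_univ, cardΩ,
      nsmul_eq_mul]
  have eA2 : A*A = Polynomial.aeval A (X^2 : ℝ[X]) := by
    rw [map_pow, Polynomial.aeval_X, pow_two]
  have eB2 : B*B = Polynomial.aeval B (X^2 : ℝ[X]) := by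
    rw [map_pow, Polynomial.aeval_X, pow_two]
  have htrB2 : (B*B).trace = (v:ℝ) * k := by
    rw [eB2, trace_aeval hB]
    refine (hsum (fun t => Polynomial.eval t ((X:ℝ[X])^2))).trans ?_
    have h3 := trace_aeval hA ((X:ℝ[X])^2)
    rw [← eA2, htrA2] at h3
    exact h3.symm
  have hsumdeg : ∑ i, ((G'.degree i : ℝ)) = (v:ℝ)*k := by
    have hdg : ∀ i, ((G'.degree i : ℝ)) = (B*B) i i := by
      intro i
      rw [hBdef, SimpleGraph.adjMatrix_mul_self_apply_self]
    rw [Finset.sum_congr rfl (fun i _ => hdg i)]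
    exact htrB2
  -- B is regular of degree k
  have hones : B *ᵥ (fun _ => (1:ℝ)) = fun _ => (k:ℝ) := by
    have hfB : Polynomial.aeval B (C (k:ℝ) - X) = (k:ℝ) • (1 : Matrix Ω Ω ℝ) - B := by
      simp only [map_sub, Polynomial.aeval_C, Polynomial.aeval_X,
        Algebra.algebraMap_eq_smul_one]
    have hpsd : (Polynomial.aeval B (C (k:ℝ) - X)).PosSemidef := by
      refine psd_aeval hB _ (fun i => ?_)
      rw [Polynomial.eval_sub, Polynomial.eval_C, Polynomial.eval_X]
      linarith [(hbound i).1]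
    have hmv : ((k:ℝ) • (1 : Matrix Ω Ω ℝ) - B) *ᵥ (fun _ => (1:ℝ))
        = fun i => (k:ℝ) - (G'.degree i : ℝ) := by
      funext i
      rw [Matrix.sub_mulVec, Matrix.smul_mulVec, Matrix.one_mulVec]
      simp only [Pi.sub_apply, Pi.smul_apply, smul_eq_mul, mul_one]
      rw [hBdef, SimpleGraph.adjMatrix_mulVec_apply]
      rw [Finset.sum_const, nsmul_eq_mul, mul_one]
      rfl
    have hdp : star (fun _ => (1:ℝ)) ⬝ᵥ ((Polynomial.aeval B (C (k:ℝ) - X)) *ᵥ (fun _ => (1:ℝ))) = 0 := by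
      rw [hfB, hmv]
      rw [star_trivial]
      simp only [dotProduct, one_mul]
      rw [Finset.sum_sub_distrib, hsumdeg, Finset.sum_const, Finset.card_univ, cardΩ,
        nsmul_eq_mul]
      ring
    have h0 := (hpsd.dotProduct_mulVec_zero_iff _).mp hdp
    rw [hfB, Matrix.sub_mulVec] at h0
    funext i
    have := congrFun h0 i
    rw [Matrix.smul_mulVec, Matrix.one_mulVec] at this
    simp only [Pi.sub_apply, Pi.smul_apply, smul_eq_mul, mul_one, Pi.zero_apply,
      sub_eq_zero] at this
    exact this.symm
  have hregB : G'.IsRegularOfDegree k := by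
    intro i
    have h := congrFun hones i
    rw [hBdef, SimpleGraph.adjMatrix_mulVec_apply] at h
    simp only [Finset.sum_const, nsmul_eq_mul, mul_one] at h
    have : (G'.degree i : ℝ) = (k:ℝ) := by
      rw [← h]; rfl
    exact_mod_cast this
  -- the quadratic matrix N
  set N : Matrix Ω Ω ℝ := Polynomial.aeval B q with hNdef
  have hNpsd : N.PosSemidef := psd_aeval hB q (fun i => (hbound i).2)
  have hNform : N = B*B + ((m:ℝ)-l)•B + ((m:ℝ)-k)•(1:Matrix Ω Ω ℝ) := hqeval B
  have hBk : B *ᵥ (fun _ => (k:ℝ)) = fun _ => (k:ℝ)*k := by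
    have h4 : (fun _ : Ω => (k:ℝ)) = (k:ℝ) • (fun _ : Ω => (1:ℝ)) := by
      funext j; simp
    rw [h4, Matrix.mulVec_smul, hones]
    funext j; simp
  have hN1 : N *ᵥ (fun _ => (1:ℝ)) = fun _ => (m:ℝ) * v := by
    rw [hNform, Matrix.add_mulVec, Matrix.add_mulVec, Matrix.smul_mulVec,
      Matrix.smul_mulVec, Matrix.one_mulVec, ← Matrix.mulVec_mulVec, hones, hBk]
    funext i
    simp only [Pi.add_apply, Pi.smul_apply, smul_eq_mul, mul_one]
    nlinarith [qk]
  have htrJ : J.trace = (v:ℝ) := by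
    rw [Matrix.trace]
    simp only [Matrix.diag, hJdef, Matrix.of_apply]
    rw [Finset.sum_const, Finset.card_univ, cardΩ, nsmul_eq_mul, mul_one]
  have htrN : N.trace = (m:ℝ) * v := by
    rw [hNdef, trace_aeval hB]
    refine (hsum (fun t => q.eval t)).trans ?_
    have h3 := trace_aeval hA q
    rw [hqA, Matrix.trace_smul, htrJ, smul_eq_mul] at h3
    exact h3.symm
  set P : Matrix Ω Ω ℝ := N - (m:ℝ) • J with hPdef
  have hJv : ∀ x : Ω → ℝ, J *ᵥ x = fun _ => ∑ j, x j := by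
    intro x; funext i
    simp [hJdef, Matrix.mulVec, dotProduct]
  have hPone : P *ᵥ (fun _ => (1:ℝ)) = 0 := by
    rw [hPdef, Matrix.sub_mulVec, hN1, Matrix.smul_mulVec, hJv]
    funext i
    simp only [Pi.sub_apply, Pi.smul_apply, smul_eq_mul, Pi.zero_apply]
    rw [Finset.sum_const, Finset.card_univ, cardΩ, nsmul_eq_mul, mul_one]
    ring
  have hJh : J.IsHermitian := by
    show Jᴴ = J
    funext i j
    simp [hJdef, Matrix.conjTranspose_apply]
  have hPherm : P.IsHermitian := by
    show Pᴴ = P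
    rw [hPdef, Matrix.conjTranspose_sub, Matrix.conjTranspose_smul, hNpsd.1, hJh]
    simp
  have hPt : Pᵀ = P := by
    have h := hPherm
    rwa [Matrix.IsHermitian, Matrix.conjTranspose_eq_transpose_of_trivial] at h
  have hvR : (0:ℝ) < v := by
    have : (3:ℝ) ≤ v := by exact_mod_cast (by omega : 3 ≤ v)
    linarith
  have hPpsd : P.PosSemidef := by
    refine Matrix.PosSemidef.of_dotProduct_mulVec_nonneg hPherm (fun x => ?_)
    set c : ℝ := (∑ j, x j) / v with hc
    set y : Ω → ℝ := fun i => x i - c with hy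
    have hysum : ∑ j, y j = 0 := by
      rw [hy]
      simp only
      rw [Finset.sum_sub_distrib, Finset.sum_const, Finset.card_univ, cardΩ, nsmul_eq_mul, hc]
      field_simp
      ring
    have hxeq : x = fun i => y i + c := by funext i; simp [hy]
    have hPy : P *ᵥ x = P *ᵥ y := by
      have h1 : x = y + (fun _ => c) := by funext i; simp [hy]
      rw [h1, Matrix.mulVec_add]
      have h2 : (fun _ : Ω => c) = c • (fun _ : Ω => (1:ℝ)) := by funext; simp
      rw [h2, Matrix.mulVec_smul, hPone, smul_zero, add_zero]
    have h1P : (fun _ : Ω => (1:ℝ)) ⬝ᵥ (P *ᵥ y) = 0 := by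
      rw [Matrix.dotProduct_mulVec, ← hPt, Matrix.vecMul_transpose, hPone]
      simp
    have hJy : J *ᵥ y = 0 := by
      rw [hJv]; funext i; simp [hysum]
    have hyP : y ⬝ᵥ (P *ᵥ y) = y ⬝ᵥ (N *ᵥ y) := by
      rw [hPdef, Matrix.sub_mulVec, Matrix.smul_mulVec, hJy, smul_zero, sub_zero]
    rw [hPy, star_trivial]
    have hsplit : x ⬝ᵥ (P *ᵥ y) = y ⬝ᵥ (P *ᵥ y) + c * ((fun _ : Ω => (1:ℝ)) ⬝ᵥ (P *ᵥ y)) := by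
      rw [hxeq]
      simp only [dotProduct, one_mul, Finset.mul_sum]
      rw [← Finset.sum_add_distrib]
      congr 1; funext i; ring
    rw [hsplit, h1P, mul_zero, add_zero, hyP]
    have h5 := hNpsd.dotProduct_mulVec_nonneg y
    rwa [star_trivial] at h5
  have htrP : P.trace = 0 := by
    rw [hPdef, Matrix.trace_sub, htrN, Matrix.trace_smul, htrJ]
    simp
  have hP0 : P = 0 := by
    have hsumeig : ∑ i, hPpsd.1.eigenvalues i = 0 := by
      have h := trace_aeval hPpsd.1 (X : ℝ[X])
      rw [Polynomial.aeval_X, htrP] at h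
      simpa using h.symm
    have hz : ∀ i ∈ Finset.univ, hPpsd.1.eigenvalues i = 0 :=
      (Finset.sum_eq_zero_iff_of_nonneg (fun i _ => hPpsd.eigenvalues_nonneg i)).mp hsumeig
    have : P = Polynomial.aeval P (X : ℝ[X]) := by rw [Polynomial.aeval_X]
    rw [this]
    exact aeval_eq_zero_of_eval hPpsd.1 X
      (fun i => by rw [Polynomial.eval_X]; exact hz i (Finset.mem_univ i))
  have hNJ : N = (m:ℝ) • J := by
    have := hP0
    rw [hPdef, sub_eq_zero] at this
    exact this
  -- entrywise conclusions
  have hcommon : ∀ a b : Ω, (B*B) a b = (Fintype.card (G'.commonNeighbors a b) : ℝ) := by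
    intro a b
    rw [← pow_two, hBdef, SimpleGraph.adjMatrix_pow_apply_eq_card_walk]
    simp only [Set.coe_setOf]
    rw [Fintype.card_congr (G'.walkLengthTwoEquivCommonNeighbors a b)]
  have hkey : ∀ a b : Ω, (B*B) a b + ((m:ℝ)-l) * (B a b)
      + ((m:ℝ)-k) * ((1:Matrix Ω Ω ℝ) a b) = (m:ℝ) := by
    intro a b
    have h := hNJ
    rw [hNform] at h
    have := congrFun (congrFun h a) b
    simpa [hJdef, Matrix.add_apply, Matrix.smul_apply, smul_eq_mul] using this
  refine ⟨hG.card, hregB, ?_, ?_⟩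
  · intro a b hab
    have h := hkey a b
    rw [hcommon, Matrix.one_apply_ne (G'.ne_of_adj hab)] at h
    have hBab : B a b = 1 := by
      rw [hBdef]; simp [hab]
    rw [hBab] at h
    have : (Fintype.card (G'.commonNeighbors a b) : ℝ) = l := by linarith
    exact_mod_cast this
  · intro a b hne hnadj
    have h := hkey a b
    rw [hcommon, Matrix.one_apply_ne hne] at h
    have hBab : B a b = 0 := by
      rw [hBdef]; simp [hnadj]
    rw [hBab] at h
    have : (Fintype.card (G'.commonNeighbors a b) : ℝ) = m := by linarith
    exact_mod_cast this

end MainProof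
end

section
/- Let Q be a non-singular quadric in PG(n,2) of projective index g ≥ 1, let α be an s-space in Q with 0 ≤ s < g, and partition the points of Q into types: (i) points of α, (ii) points outside α lying in an (s+1)-space of Q containing α, (iii) all other points. Let Γ be the point-graph of Q, let X be the set of type-(ii) vertices and Y the remaining vertices. Then {X, Y} is a Godsil–McKay partition of Γ, and the resulting switched graph Γ_s is strongly regular with the same parameters as Γ. -/
section GM

open Matrix SimpleGraph Finset in
open scoped Classical in
/-- From the SRG matrix equation, deduce strong regularity. -/
theorem isSRGWith_of_matrix {Ω : Type*} [Fintype Ω] (H : SimpleGraph Ω)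
    {v k l m : ℕ} (hcard : Fintype.card Ω = v)
    (hM : H.adjMatrix ℚ ^ 2 = (k : ℕ) • (1 : Matrix Ω Ω ℚ) + l • H.adjMatrix ℚ
      + m • Hᶜ.adjMatrix ℚ) :
    H.IsSRGWith v k l m := by
  have hsq : ∀ u w : Ω, (H.adjMatrix ℚ ^ 2) u w
      = (Fintype.card (H.commonNeighbors u w) : ℚ) := by
    intro u w
    simp only [adjMatrix_pow_apply_eq_card_walk, Set.coe_setOf]
    rw [Fintype.card_congr (H.walkLengthTwoEquivCommonNeighbors u w)]
  constructor
  · exact hcard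
  · intro u
    have h0 := congrFun (congrFun hM u) u
    rw [hsq u u] at h0
    have hcn : Fintype.card (H.commonNeighbors u u) = H.degree u := by
      have hh : H.commonNeighbors u u = H.neighborSet u := by
        rw [commonNeighbors, Set.inter_self]
      rw [← card_neighborSet_eq_degree]
      exact Fintype.card_congr (Equiv.setCongr hh)
    simp only [Matrix.add_apply, Matrix.smul_apply, Matrix.one_apply_eq,
      adjMatrix_apply, compl_adj, SimpleGraph.irrefl, if_false, smul_zero,
      and_false, add_zero, ne_eq, not_true_eq_false, false_and] at h0
    rw [hcn] at h0
    have : (H.degree u : ℚ) = (k : ℚ) := by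
      rw [h0]; simp
    exact_mod_cast this
  · intro u w hadj
    have h0 := congrFun (congrFun hM u) w
    have hne : u ≠ w := hadj.ne
    rw [hsq u w] at h0
    simp only [Matrix.add_apply, Matrix.smul_apply, Matrix.one_apply_ne hne,
      adjMatrix_apply, compl_adj, hadj, if_true, smul_zero,
      not_true_eq_false, and_false, if_false, ne_eq] at h0
    have : (Fintype.card ↑(H.commonNeighbors u w) : ℚ) = (l : ℚ) := by
      rw [h0]; simp
    exact_mod_cast this
  · intro u w hne hnadj
    have h0 := congrFun (congrFun hM u) w
    rw [hsq u w] at h0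
    simp only [Matrix.add_apply, Matrix.smul_apply, Matrix.one_apply_ne hne,
      adjMatrix_apply, compl_adj, hnadj, if_false, smul_zero, ne_eq, hne,
      not_false_eq_true, true_and, and_self, if_true] at h0
    have : (Fintype.card ↑(H.commonNeighbors u w) : ℚ) = (m : ℚ) := by
      rw [h0]; simp
    exact_mod_cast this

open Matrix SimpleGraph Finset in
open scoped Classical in
theorem gm_switch_srg {Ω : Type*} [Fintype Ω] (G : SimpleGraph Ω) (X : Set Ω)
    (h1 : ∃ d : ℕ, ∀ p ∈ X, (X ∩ G.neighborSet p).ncard = d)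
    (h2 : ∀ p ∉ X, (X ∩ G.neighborSet p).ncard = 0 ∨ halfIn G X p ∨
      (X ∩ G.neighborSet p).ncard = X.ncard)
    {v k l m : ℕ} (hsrg : G.IsSRGWith v k l m) :
    (gmSwitch G X).IsSRGWith v k l m := by
  classical
  obtain ⟨d, hd⟩ := h1
  set A : Matrix Ω Ω ℚ := G.adjMatrix ℚ with hA
  set mq : ℚ := (X.ncard : ℚ) with hmq
  set χ : Ω → ℚ := fun i => if i ∈ X then 1 else 0 with hχ
  set nX : Ω → ℚ := fun j => ((X ∩ G.neighborSet j).ncard : ℚ) with hnXdef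
  set S : Matrix Ω Ω ℚ :=
    Matrix.of (fun i j => 2/mq * (χ i * χ j) + (if i = j then 1 - 2*χ i else 0)) with hS
  clear_value A mq χ nX S
  -- counting: filter-card to ncard
  have hcardP : ∀ (P : Ω → Prop) [DecidablePred P],
      ((univ.filter P).card : ℚ) = (({x | P x} : Set Ω).ncard : ℚ) := by
    intro P hP
    rw [Set.ncard_eq_toFinset_card', Set.toFinset_setOf]
  have hχm : ∑ i, χ i = mq := by
    rw [hχ, hmq, Finset.sum_boole]
    have : X = {x | x ∈ X} := rfl
    rw [this] at *
    exact hcardP _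
  have hrow : ∀ j, ∑ i, χ i * A i j = nX j := by
    intro j
    have hset : X ∩ G.neighborSet j = {x | x ∈ X ∧ G.Adj j x} := by
      ext x; simp [SimpleGraph.mem_neighborSet]
    have he : ∀ i, χ i * A i j = if i ∈ X ∧ G.Adj j i then 1 else 0 := by
      intro i
      rw [hχ, hA]
      simp only [adjMatrix_apply]
      by_cases h1 : i ∈ X <;> by_cases h2 : G.Adj j i <;>
        simp [h1, h2, G.adj_comm i j]
    rw [Finset.sum_congr rfl fun i _ => he i, Finset.sum_boole, hnXdef]
    show _ = ((X ∩ G.neighborSet j).ncard : ℚ)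
    rw [hset]
    exact hcardP _
  have hcol : ∀ j, ∑ i, A j i * χ i = nX j := by
    intro j
    rw [← hrow j]
    refine Finset.sum_congr rfl fun i _ => ?_
    rw [mul_comm]
    congr 1
    rw [hA]
    simp only [adjMatrix_apply]
    exact if_congr (G.adj_comm j i) rfl rfl
  have hXsum : ∑ j, nX j * χ j = d * mq := by
    have he : ∀ j, nX j * χ j = (d : ℚ) * χ j := by
      intro j
      by_cases h : j ∈ X
      · rw [hnXdef]
        show ((X ∩ G.neighborSet j).ncard : ℚ) * χ j = _
        rw [hd j h]
      · rw [hχ]; simp [h]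
    rw [Finset.sum_congr rfl fun j _ => he j, ← Finset.mul_sum, hχm]
  -- multiplication by S, entrywise
  have hmulS : ∀ (M : Matrix Ω Ω ℚ) u w,
      (M * S) u w = 2/mq * (∑ j, M u j * χ j) * χ w + M u w * (1 - 2*χ w) := by
    intro M u w
    rw [Matrix.mul_apply]
    have he : ∀ j, M u j * S j w
        = 2/mq * (M u j * χ j) * χ w + (if j = w then M u j * (1 - 2*χ j) else 0) := by
      intro j
      rw [hS]
      simp only [Matrix.of_apply]
      simp only [mul_add, mul_ite, mul_zero]
      congr 1
      ring
    rw [Finset.sum_congr rfl fun j _ => he j, Finset.sum_add_distrib]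
    congr 1
    · rw [← Finset.sum_mul, ← Finset.mul_sum]
    · rw [Finset.sum_ite_eq' univ w fun j => M u j * (1 - 2*χ j), if_pos (mem_univ w)]
  have hSmul : ∀ (M : Matrix Ω Ω ℚ) u w,
      (S * M) u w = 2/mq * χ u * (∑ j, χ j * M j w) + (1 - 2*χ u) * M u w := by
    intro M u w
    rw [Matrix.mul_apply]
    have he : ∀ j, S u j * M j w
        = 2/mq * χ u * (χ j * M j w) + (if u = j then (1 - 2*χ u) * M j w else 0) := by
      intro j
      rw [hS]
      simp only [Matrix.of_apply]
      simp only [add_mul, ite_mul, zero_mul]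
      congr 1
      ring
    rw [Finset.sum_congr rfl fun j _ => he j, Finset.sum_add_distrib]
    congr 1
    · rw [← Finset.mul_sum]
    · rw [Finset.sum_ite_eq univ u fun j => (1 - 2*χ u) * M j w, if_pos (mem_univ u)]
  -- S*A entrywise
  have hSA : ∀ u w, (S * A) u w = 2/mq * χ u * nX w + (1 - 2*χ u) * A u w := by
    intro u w
    rw [hSmul A u w, hrow w]
  have hSAcol : ∀ u, ∑ j, (S * A) u j * χ j
      = 2/mq * χ u * (d * mq) + (1 - 2*χ u) * nX u := by
    intro u
    have he : ∀ j, (S * A) u j * χ j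
        = 2/mq * χ u * (nX j * χ j) + (1 - 2*χ u) * (A u j * χ j) := by
      intro j
      rw [hSA u j]
      ring
    rw [Finset.sum_congr rfl fun j _ => he j, Finset.sum_add_distrib,
      ← Finset.mul_sum, ← Finset.mul_sum, hXsum, hcol u]
  have hSAS : ∀ u w, (S * A * S) u w
      = 2/mq * (2/mq * χ u * (d * mq) + (1 - 2*χ u) * nX u) * χ w
        + (2/mq * χ u * nX w + (1 - 2*χ u) * A u w) * (1 - 2*χ w) := by
    intro u w
    rw [hmulS (S * A) u w, hSAcol u, hSA u w]
  -- adjacency of the switched graph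
  have hadj1 : ∀ u w, ¬ ((u ∈ X ∧ w ∉ X ∧ halfIn G X w) ∨ (w ∈ X ∧ u ∉ X ∧ halfIn G X u)) →
      ((gmSwitch G X).Adj u w ↔ G.Adj u w) := by
    intro u w hC
    constructor
    · rintro (⟨h1, -, -⟩ | ⟨-, h⟩)
      · exact absurd h1 hC
      · exact h
    · intro h
      exact Or.inr ⟨hC, h⟩
  have hadj2 : ∀ u w, ((u ∈ X ∧ w ∉ X ∧ halfIn G X w) ∨ (w ∈ X ∧ u ∉ X ∧ halfIn G X u)) →
      u ≠ w → ((gmSwitch G X).Adj u w ↔ ¬ G.Adj u w) := by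
    intro u w hC hne
    constructor
    · rintro (⟨-, hn, -⟩ | ⟨hC', -⟩)
      · exact hn
      · exact absurd hC hC'
    · intro hn
      exact Or.inl ⟨hC, hn, hne⟩
  have hmq0 : ∀ u, u ∈ X → mq ≠ 0 := by
    intro u hu
    rw [hmq]
    have hpos : 0 < X.ncard := (Set.ncard_pos (Set.toFinite X)).mpr ⟨u, hu⟩
    exact_mod_cast hpos.ne'
  have hχ1 : ∀ u, u ∈ X → χ u = 1 := by
    intro u hu; rw [hχ]; simp [hu]
  have hχ0 : ∀ u, u ∉ X → χ u = 0 := by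
    intro u hu; rw [hχ]; simp [hu]
  have hnXd : ∀ u, u ∈ X → nX u = d := by
    intro u hu
    rw [hnXdef]
    show ((X ∩ G.neighborSet u).ncard : ℚ) = d
    rw [hd u hu]
  -- main entry identification
  have hAdj' : (gmSwitch G X).adjMatrix ℚ = S * A * S := by
    ext u w
    rw [hSAS u w, SimpleGraph.adjMatrix_apply]
    by_cases hu : u ∈ X <;> by_cases hw : w ∈ X
    · -- both in X
      have hm0 : mq ≠ 0 := hmq0 u hu
      have hC : ¬ ((u ∈ X ∧ w ∉ X ∧ halfIn G X w) ∨ (w ∈ X ∧ u ∉ X ∧ halfIn G X u)) := by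
        rintro (⟨-, h, -⟩ | ⟨-, h, -⟩)
        · exact h hw
        · exact h hu
      rw [if_congr (hadj1 u w hC) rfl rfl, hχ1 u hu, hχ1 w hw, hnXd u hu, hnXd w hw]
      have : (if G.Adj u w then (1:ℚ) else 0) = A u w := by rw [hA, SimpleGraph.adjMatrix_apply]
      rw [this]
      field_simp
      ring
    · -- u ∈ X, w ∉ X
      have hm0 : mq ≠ 0 := hmq0 u hu
      have hne : u ≠ w := fun h => hw (h ▸ hu)
      rw [hχ1 u hu, hχ0 w hw]
      rcases h2 w hw with h0 | hhalf | hall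
      · -- no neighbours in X
        have hnw : nX w = 0 := by
          rw [hnXdef]
          show ((X ∩ G.neighborSet w).ncard : ℚ) = 0
          rw [h0]; norm_num
        have hnadj : ¬ G.Adj u w := by
          intro h
          have : u ∈ X ∩ G.neighborSet w := ⟨hu, h.symm⟩
          rw [Set.ncard_eq_zero (Set.toFinite _)] at h0
          rw [h0] at this
          exact this
        have hC : ¬ ((u ∈ X ∧ w ∉ X ∧ halfIn G X w) ∨ (w ∈ X ∧ u ∉ X ∧ halfIn G X u)) := by
          rintro (⟨-, -, h⟩ | ⟨h, -, -⟩)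
          · rw [halfIn, h0] at h
            exact hm0 (by rw [hmq, ← h]; norm_num)
          · exact hw h
        rw [if_congr (hadj1 u w hC) rfl rfl, if_neg hnadj]
        have : A u w = 0 := by rw [hA, SimpleGraph.adjMatrix_apply, if_neg hnadj]
        rw [this, hnw]
        ring
      · -- half case : switch
        have hC : ((u ∈ X ∧ w ∉ X ∧ halfIn G X w) ∨ (w ∈ X ∧ u ∉ X ∧ halfIn G X u)) :=
          Or.inl ⟨hu, hw, hhalf⟩
        have hnw : 2 * nX w = mq := by
          rw [hnXdef, hmq]
          show 2 * ((X ∩ G.neighborSet w).ncard : ℚ) = (X.ncard : ℚ)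
          exact_mod_cast congrArg (Nat.cast : ℕ → ℚ) hhalf
        rw [if_congr (hadj2 u w hC hne) rfl rfl]
        have hAval : A u w = if G.Adj u w then 1 else 0 := by
          rw [hA, SimpleGraph.adjMatrix_apply]
        by_cases hadj : G.Adj u w
        · rw [if_neg (by simpa using hadj), hAval, if_pos hadj]
          field_simp
          linarith [hnw]
        · rw [if_pos hadj, hAval, if_neg hadj]
          field_simp
          linarith [hnw]
      · -- all case
        have hXN : X ∩ G.neighborSet w = X :=
          Set.eq_of_subset_of_ncard_le Set.inter_subset_left (le_of_eq hall.symm)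
            (Set.toFinite _)
        have hadj : G.Adj u w := by
          have : u ∈ X ∩ G.neighborSet w := hXN.symm ▸ hu
          exact this.2.symm
        have hnw : nX w = mq := by
          rw [hnXdef, hmq]
          show ((X ∩ G.neighborSet w).ncard : ℚ) = (X.ncard : ℚ)
          rw [hall]
        have hC : ¬ ((u ∈ X ∧ w ∉ X ∧ halfIn G X w) ∨ (w ∈ X ∧ u ∉ X ∧ halfIn G X u)) := by
          rintro (⟨-, -, h⟩ | ⟨h, -, -⟩)
          · rw [halfIn, hall] at h
            have : X.ncard = 0 := by omega
            exact hm0 (by rw [hmq, this]; norm_num)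
          · exact hw h
        rw [if_congr (hadj1 u w hC) rfl rfl, if_pos hadj]
        have : A u w = 1 := by rw [hA, SimpleGraph.adjMatrix_apply, if_pos hadj]
        rw [this, hnw]
        field_simp
        ring
    · -- u ∉ X, w ∈ X
      have hm0 : mq ≠ 0 := hmq0 w hw
      have hne : u ≠ w := fun h => hu (h ▸ hw)
      rw [hχ0 u hu, hχ1 w hw]
      rcases h2 u hu with h0 | hhalf | hall
      · have hnu : nX u = 0 := by
          rw [hnXdef]
          show ((X ∩ G.neighborSet u).ncard : ℚ) = 0
          rw [h0]; norm_num
        have hnadj : ¬ G.Adj u w := by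
          intro h
          have : w ∈ X ∩ G.neighborSet u := ⟨hw, h⟩
          rw [Set.ncard_eq_zero (Set.toFinite _)] at h0
          rw [h0] at this
          exact this
        have hC : ¬ ((u ∈ X ∧ w ∉ X ∧ halfIn G X w) ∨ (w ∈ X ∧ u ∉ X ∧ halfIn G X u)) := by
          rintro (⟨h, -, -⟩ | ⟨-, -, h⟩)
          · exact hu h
          · rw [halfIn, h0] at h
            exact hm0 (by rw [hmq, ← h]; norm_num)
        rw [if_congr (hadj1 u w hC) rfl rfl, if_neg hnadj]
        have : A u w = 0 := by rw [hA, SimpleGraph.adjMatrix_apply, if_neg hnadj]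
        rw [this, hnu]
        ring
      · have hC : ((u ∈ X ∧ w ∉ X ∧ halfIn G X w) ∨ (w ∈ X ∧ u ∉ X ∧ halfIn G X u)) :=
          Or.inr ⟨hw, hu, hhalf⟩
        have hnu : 2 * nX u = mq := by
          rw [hnXdef, hmq]
          show 2 * ((X ∩ G.neighborSet u).ncard : ℚ) = (X.ncard : ℚ)
          exact_mod_cast congrArg (Nat.cast : ℕ → ℚ) hhalf
        rw [if_congr (hadj2 u w hC hne) rfl rfl]
        have hAval : A u w = if G.Adj u w then 1 else 0 := by
          rw [hA, SimpleGraph.adjMatrix_apply]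
        by_cases hadj : G.Adj u w
        · rw [if_neg (by simpa using hadj), hAval, if_pos hadj]
          field_simp
          linarith [hnu]
        · rw [if_pos hadj, hAval, if_neg hadj]
          field_simp
          linarith [hnu]
      · have hXN : X ∩ G.neighborSet u = X :=
          Set.eq_of_subset_of_ncard_le Set.inter_subset_left (le_of_eq hall.symm)
            (Set.toFinite _)
        have hadj : G.Adj u w := by
          have : w ∈ X ∩ G.neighborSet u := hXN.symm ▸ hw
          exact this.2
        have hnu : nX u = mq := by
          rw [hnXdef, hmq]
          show ((X ∩ G.neighborSet u).ncard : ℚ) = (X.ncard : ℚ)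
          rw [hall]
        have hC : ¬ ((u ∈ X ∧ w ∉ X ∧ halfIn G X w) ∨ (w ∈ X ∧ u ∉ X ∧ halfIn G X u)) := by
          rintro (⟨h, -, -⟩ | ⟨-, -, h⟩)
          · exact hu h
          · rw [halfIn, hall] at h
            have : X.ncard = 0 := by omega
            exact hm0 (by rw [hmq, this]; norm_num)
        rw [if_congr (hadj1 u w hC) rfl rfl, if_pos hadj]
        have : A u w = 1 := by rw [hA, SimpleGraph.adjMatrix_apply, if_pos hadj]
        rw [this, hnu]
        field_simp
        ring
    · -- both outside X
      have hC : ¬ ((u ∈ X ∧ w ∉ X ∧ halfIn G X w) ∨ (w ∈ X ∧ u ∉ X ∧ halfIn G X u)) := by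
        rintro (⟨h, -, -⟩ | ⟨h, -, -⟩)
        · exact hu h
        · exact hw h
      rw [if_congr (hadj1 u w hC) rfl rfl, hχ0 u hu, hχ0 w hw]
      have : (if G.Adj u w then (1:ℚ) else 0) = A u w := by rw [hA, SimpleGraph.adjMatrix_apply]
      rw [this]
      ring
  -- S is an involution
  have hχsq : ∀ j, χ j * χ j = χ j := by
    intro j
    rw [hχ]
    by_cases h : j ∈ X <;> simp [h]
  have hχmul : ∀ j, χ j * (1 - 2 * χ j) + 2/mq * χ j * mq = χ j := by
    intro j
    by_cases h : j ∈ X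
    · have hm0 : mq ≠ 0 := hmq0 j h
      rw [hχ1 j h]
      field_simp
      ring
    · rw [hχ0 j h]
      ring
  have hrowS : ∀ w, ∑ j, χ j * S j w = χ w := by
    intro w
    have he : ∀ j, χ j * S j w
        = 2/mq * (χ j * χ j) * χ w + (if j = w then χ j * (1 - 2*χ j) else 0) := by
      intro j
      rw [hS]
      simp only [Matrix.of_apply]
      rw [mul_add, mul_ite, mul_zero]
      congr 1
      ring
    rw [Finset.sum_congr rfl fun j _ => he j, Finset.sum_add_distrib,
      Finset.sum_ite_eq' univ w fun j => χ j * (1 - 2*χ j), if_pos (mem_univ w)]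
    have : ∑ j, 2/mq * (χ j * χ j) * χ w = 2/mq * mq * χ w := by
      rw [Finset.sum_congr rfl fun j _ => by rw [hχsq j], ← Finset.sum_mul, ← Finset.mul_sum, hχm]
    rw [this]
    have := hχmul w
    by_cases h : w ∈ X
    · have hm0 : mq ≠ 0 := hmq0 w h
      rw [hχ1 w h]
      field_simp
      ring
    · rw [hχ0 w h]
      ring
  have hSS : S * S = 1 := by
    ext u w
    rw [hSmul S u w, hrowS w, hS]
    simp only [Matrix.of_apply, Matrix.one_apply]
    by_cases h : u = w
    · subst h
      rw [if_pos rfl, if_pos rfl]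
      by_cases hu : u ∈ X
      · have hm0 : mq ≠ 0 := hmq0 u hu
        rw [hχ1 u hu]
        field_simp
        ring
      · rw [hχ0 u hu]
        ring
    · rw [if_neg h, if_neg h]
      by_cases hu : u ∈ X <;> by_cases hw : w ∈ X
      · have hm0 : mq ≠ 0 := hmq0 u hu
        rw [hχ1 u hu, hχ1 w hw]
        field_simp
        norm_num
      · rw [hχ1 u hu, hχ0 w hw]
        ring
      · rw [hχ0 u hu, hχ1 w hw]
        ring
      · rw [hχ0 u hu, hχ0 w hw]
        ring
  -- all-ones matrix
  set J : Matrix Ω Ω ℚ := Matrix.of (fun _ _ => 1) with hJ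
  have hJS : J * S = J := by
    ext u w
    rw [hmulS J u w]
    have h1 : ∀ j, J u j * χ j = χ j := by
      intro j; rw [hJ]; simp
    rw [Finset.sum_congr rfl fun j _ => h1 j, hχm, hJ]
    simp only [Matrix.of_apply]
    by_cases h : w ∈ X
    · have hm0 : mq ≠ 0 := hmq0 w h
      rw [hχ1 w h]
      field_simp
      ring
    · rw [hχ0 w h]
      ring
  have hSJ : S * J = J := by
    ext u w
    rw [hSmul J u w]
    have h1 : ∀ j, χ j * J j w = χ j := by
      intro j; rw [hJ]; simp
    rw [Finset.sum_congr rfl fun j _ => h1 j, hχm, hJ]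
    simp only [Matrix.of_apply]
    by_cases h : u ∈ X
    · have hm0 : mq ≠ 0 := hmq0 u h
      rw [hχ1 u h]
      field_simp
      ring
    · rw [hχ0 u h]
      ring
  -- complement adjacency matrix
  have hcompl : ∀ H : SimpleGraph Ω, Hᶜ.adjMatrix ℚ = J - 1 - H.adjMatrix ℚ := by
    intro H
    ext u w
    simp only [SimpleGraph.adjMatrix_apply, SimpleGraph.compl_adj, Matrix.sub_apply,
      Matrix.one_apply, hJ, Matrix.of_apply]
    by_cases h : u = w
    · subst h
      simp
    · by_cases hadj : H.Adj u w <;> simp [h, hadj]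
  -- assemble
  have hG2 : A * A = (k : ℚ) • (1 : Matrix Ω Ω ℚ) + (l : ℚ) • A + (m : ℚ) • (J - 1 - A) := by
    have := hsrg.matrix_eq (α := ℚ)
    rw [pow_two, hcompl G, ← hA] at this
    rw [this]
    simp only [← Nat.cast_smul_eq_nsmul (R := ℚ)]
  apply isSRGWith_of_matrix _ hsrg.card
  rw [hcompl (gmSwitch G X), hAdj']
  simp only [← Nat.cast_smul_eq_nsmul (R := ℚ)]
  have hsq : (S * A * S) ^ 2 = S * ((A * A) * S) := by
    rw [pow_two]
    have h1 : S * A * S * (S * A * S) = S * (A * ((S * S) * (A * S))) := by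
      simp only [Matrix.mul_assoc]
    rw [h1, hSS, Matrix.one_mul]
    simp only [Matrix.mul_assoc]
  rw [hsq, hG2]
  have hSJS : S * (J * S) = J := by rw [← Matrix.mul_assoc, hSJ, hJS]
  simp only [Matrix.mul_add, Matrix.add_mul, Matrix.mul_sub, Matrix.sub_mul,
    Matrix.mul_smul, Matrix.smul_mul, Matrix.mul_one, Matrix.one_mul]
  rw [hSS, ← Matrix.mul_assoc S J S, hSJ, hJS]
  simp only [Matrix.mul_assoc]

end GM

section Geometry

open QuadraticMap

private lemma zmod2_cases (c : ZMod 2) : c = 0 ∨ c = 1 := by revert c; decide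

private lemma zmod2_units (a : (ZMod 2)ˣ) : (a : ZMod 2) = 1 := by
  rcases zmod2_cases (a : ZMod 2) with h | h
  · exact absurd h a.ne_zero
  · exact h

private lemma one_add_one_zmod2 : (1 : ZMod 2) + 1 = 0 := by decide

variable {V : Type*} [AddCommGroup V] [Module (ZMod 2) V]

private lemma add_self_f2 (x : V) : x + x = 0 := by
  have h : x + x = ((1 : ZMod 2) + 1) • x := by rw [add_smul, one_smul]
  rw [h, one_add_one_zmod2, zero_smul]

private lemma rep_mk (v : V) (hv : v ≠ 0) : (Projectivization.mk (ZMod 2) v hv).rep = v := by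
  obtain ⟨a, ha⟩ := Projectivization.exists_smul_eq_mk_rep (ZMod 2) v hv
  rw [← ha, Units.smul_def, zmod2_units a, one_smul]

private lemma point_eq_iff (p q : Projectivization (ZMod 2) V) : p = q ↔ p.rep = q.rep := by
  constructor
  · rintro rfl; rfl
  · intro h
    rw [← p.mk_rep, ← q.mk_rep]
    exact (Projectivization.mk_eq_mk_iff _ _ _ _ _).mpr ⟨1, by simp [h]⟩

private lemma mem_span_f2 (v x : V) :
    x ∈ Submodule.span (ZMod 2) ({v} : Set V) ↔ x = 0 ∨ x = v := by
  rw [Submodule.mem_span_singleton]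
  constructor
  · rintro ⟨a, rfl⟩
    rcases zmod2_cases a with h | h <;> subst h <;> simp
  · rintro (rfl | rfl)
    · exact ⟨0, by simp⟩
    · exact ⟨1, one_smul _ _⟩

variable (Q : QuadraticForm (ZMod 2) V)

private lemma qadd (a b : V) : Q (a + b) = Q a + Q b + polar (⇑Q) a b := by
  rw [polar]; ring

private lemma polar_self_f2 (a : V) : polar (⇑Q) a a = 0 := by
  rw [polar_self, two_nsmul]
  exact add_self_f2 _

private lemma polar_alpha {α : Submodule (ZMod 2) V} (hα : totallySingular Q α)
    {a b : V} (ha : a ∈ α) (hb : b ∈ α) : polar (⇑Q) a b = 0 := by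
  have h := qadd Q a b
  rw [hα a ha, hα b hb, hα _ (add_mem ha hb)] at h
  simpa using h.symm

private lemma ts_sup_iff (p q : QuadricPoint Q) :
    totallySingular Q (p.1.submodule ⊔ q.1.submodule) ↔ polar (⇑Q) p.1.rep q.1.rep = 0 := by
  rw [Projectivization.submodule_eq, Projectivization.submodule_eq]
  constructor
  · intro h
    have hm : p.1.rep + q.1.rep ∈
        Submodule.span (ZMod 2) ({p.1.rep} : Set V) ⊔ Submodule.span (ZMod 2) {q.1.rep} :=
      add_mem (Submodule.mem_sup_left (Submodule.mem_span_singleton_self _))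
        (Submodule.mem_sup_right (Submodule.mem_span_singleton_self _))
    have h2 := h _ hm
    rw [qadd, p.2, q.2] at h2
    simpa using h2
  · intro h x hx
    rw [Submodule.mem_sup] at hx
    obtain ⟨y, hy, z, hz, rfl⟩ := hx
    rw [mem_span_f2] at hy hz
    rcases hy with rfl | rfl <;> rcases hz with rfl | rfl <;>
      simp [p.2, q.2, qadd, h]

private lemma adj_iff (p q : QuadricPoint Q) :
    (pointGraph Q).Adj p q ↔ p.1.rep ≠ q.1.rep ∧ polar (⇑Q) p.1.rep q.1.rep = 0 := by
  show (p ≠ q ∧ _) ↔ _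
  rw [ts_sup_iff, Ne, Ne, Subtype.ext_iff, point_eq_iff]

private lemma ts_alpha_iff (α : Submodule (ZMod 2) V) (hα : totallySingular Q α)
    (p : QuadricPoint Q) :
    totallySingular Q (α ⊔ p.1.submodule) ↔ ∀ a ∈ α, polar (⇑Q) a p.1.rep = 0 := by
  rw [Projectivization.submodule_eq]
  constructor
  · intro h a ha
    have hm : a + p.1.rep ∈ α ⊔ Submodule.span (ZMod 2) ({p.1.rep} : Set V) :=
      add_mem (Submodule.mem_sup_left ha)
        (Submodule.mem_sup_right (Submodule.mem_span_singleton_self _))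
    have h2 := h _ hm
    rw [qadd, hα a ha, p.2] at h2
    simpa using h2
  · intro h x hx
    rw [Submodule.mem_sup] at hx
    obtain ⟨y, hy, z, hz, rfl⟩ := hx
    rw [mem_span_f2] at hz
    rcases hz with rfl | rfl
    · rw [add_zero]; exact hα y hy
    · rw [qadd, hα y hy, p.2, h y hy]; ring

private lemma typeII_iff (α : Submodule (ZMod 2) V) (hα : totallySingular Q α)
    (p : QuadricPoint Q) :
    typeII Q α p ↔ (p.1.rep ∉ α ∧ ∀ a ∈ α, polar (⇑Q) a p.1.rep = 0) := by
  rw [typeII, ts_alpha_iff Q α hα]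

private lemma typeIII_iff (α : Submodule (ZMod 2) V) (hα : totallySingular Q α)
    (p : QuadricPoint Q) :
    typeIII Q α p ↔ (p.1.rep ∉ α ∧ ∃ a ∈ α, polar (⇑Q) a p.1.rep ≠ 0) := by
  rw [typeIII, ts_alpha_iff Q α hα]
  constructor
  · rintro ⟨h1, h2⟩
    push_neg at h2
    exact ⟨h1, h2⟩
  · rintro ⟨h1, h2⟩
    refine ⟨h1, ?_⟩
    push_neg
    exact h2

private lemma rep_injective : Function.Injective (fun p : QuadricPoint Q => p.1.rep) := by
  intro p q h
  exact Subtype.ext ((point_eq_iff p.1 q.1).mpr h)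

variable [Finite V]

private lemma ncard_transfer (P : V → Prop) :
    ({p : QuadricPoint Q | P p.1.rep}).ncard
      = ({v : V | v ≠ 0 ∧ Q v = 0 ∧ P v}).ncard := by
  rw [← Set.ncard_image_of_injective _ (rep_injective Q)]
  congr 1
  ext v
  simp only [Set.mem_image, Set.mem_setOf_eq]
  constructor
  · rintro ⟨p, hp, rfl⟩
    exact ⟨p.1.rep_nonzero, p.2, hp⟩
  · rintro ⟨h0, hQ0, hP⟩
    refine ⟨⟨Projectivization.mk (ZMod 2) v h0, ?_⟩, ?_, ?_⟩
    · rw [rep_mk v h0]; exact hQ0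
    · show P _
      rw [rep_mk v h0]; exact hP
    · exact rep_mk v h0

private lemma ncard_invol (S T : Set V) (f : V → V) (hff : ∀ x, f (f x) = x)
    (hST : ∀ x ∈ S, f x ∈ T) (hTS : ∀ x ∈ T, f x ∈ S) : S.ncard = T.ncard := by
  have hinj : Function.Injective f := Function.LeftInverse.injective hff
  have h1 : f '' S ⊆ T := by rintro _ ⟨x, hx, rfl⟩; exact hST x hx
  have h2 : f '' T ⊆ S := by rintro _ ⟨x, hx, rfl⟩; exact hTS x hx
  have hle1 := Set.ncard_le_ncard h1 (Set.toFinite T)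
  have hle2 := Set.ncard_le_ncard h2 (Set.toFinite S)
  rw [Set.ncard_image_of_injective _ hinj] at hle1 hle2
  omega

private lemma ncard_split (U : Set V) (g : V → ZMod 2) :
    U.ncard = ({x ∈ U | g x = 0}).ncard + ({x ∈ U | g x = 1}).ncard := by
  rw [← Set.ncard_union_eq ?_ (Set.toFinite _) (Set.toFinite _)]
  · congr 1
    ext x
    simp only [Set.mem_union, Set.mem_setOf_eq]
    constructor
    · intro hx
      rcases zmod2_cases (g x) with h | h
      · exact Or.inl ⟨hx, h⟩
      · exact Or.inr ⟨hx, h⟩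
    · rintro (⟨hx, -⟩ | ⟨hx, -⟩) <;> exact hx
  · rw [Set.disjoint_left]
    rintro x ⟨-, h0⟩ ⟨-, h1⟩
    rw [h0] at h1
    exact one_ne_zero h1.symm

open LinearMap in
private lemma exists_polar_one (hQ : quadricNonsingular Q) (α : Submodule (ZMod 2) V)
    (hα : totallySingular Q α) (p : V) (hp0 : p ≠ 0) (hpQ : Q p = 0) (hpα : p ∉ α)
    (hperp : ∀ a ∈ α, polar (⇑Q) a p = 0) :
    ∃ t : V, (∀ a ∈ α, polar (⇑Q) a t = 0) ∧ polar (⇑Q) p t = 1 := by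
  set B : LinearMap.BilinForm (ZMod 2) V := polarBilin Q with hB
  have hBapp : ∀ x y, B x y = polar (⇑Q) x y := fun x y => rfl
  have hsymm : ∀ x y, B x y = B y x := fun x y => polar_comm _ x y
  have hrefl : B.IsRefl := fun x y h => by rw [hsymm]; exact h
  set T : Submodule (ZMod 2) V := B.orthogonal α with hT
  set R : Submodule (ZMod 2) V := B.orthogonal ⊤ with hR
  set O : Submodule (ZMod 2) V := B.orthogonal T with hO
  by_contra hcon
  push_neg at hcon
  -- p is orthogonal to all of T
  have hpO : p ∈ O := by
    intro t ht
    have ht' : ∀ a ∈ α, polar (⇑Q) a t = 0 := fun a ha => ht a ha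
    have : polar (⇑Q) p t = 0 := by
      rcases zmod2_cases (polar (⇑Q) p t) with h | h
      · exact h
      · exact absurd h (hcon t ht')
    show B t p = 0
    rw [hsymm]
    exact this
  have hRT : R ≤ T := fun r hr a ha => hr a Submodule.mem_top
  have hαO : α ≤ O := by
    intro a ha t ht
    show B t a = 0
    rw [hsymm]
    exact ht a ha
  have hRO : R ≤ O := fun r hr t ht => hr t Submodule.mem_top
  have f1 := LinearMap.BilinForm.finrank_add_finrank_orthogonal hrefl (W := α)
  have f2 := LinearMap.BilinForm.finrank_add_finrank_orthogonal hrefl (W := T)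
  rw [← hR] at f1 f2
  rw [← hT] at f1
  rw [← hO] at f2
  have hTR : T ⊓ R = R := inf_eq_right.mpr hRT
  rw [hTR] at f2
  have f3 := Submodule.finrank_sup_add_finrank_inf_eq α R
  have hle : α ⊔ R ≤ O := sup_le hαO hRO
  have hfin : Module.finrank (ZMod 2) O ≤ Module.finrank (ZMod 2) (α ⊔ R : Submodule (ZMod 2) V) := by
    have hαR : Module.finrank (ZMod 2) (α ⊓ R : Submodule (ZMod 2) V)
        ≤ Module.finrank (ZMod 2) R := Submodule.finrank_mono inf_le_right
    omega
  have heq : α ⊔ R = O := Submodule.eq_of_le_of_finrank_le hle hfin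
  rw [← heq] at hpO
  rw [Submodule.mem_sup] at hpO
  obtain ⟨a, ha, r, hr, hp⟩ := hpO
  have hAr : polar (⇑Q) a r = 0 := by
    have := hr a Submodule.mem_top
    exact this
  have hQr : Q r = 0 := by
    have h := qadd Q a r
    rw [hp, hpQ, hα a ha, hAr] at h
    simpa using h.symm
  have hr0 : r ≠ 0 := by
    rintro rfl
    rw [add_zero] at hp
    exact hpα (hp ▸ ha)
  obtain ⟨w, hw⟩ := hQ r hr0 hQr
  apply hw
  rw [polar_comm]
  exact hr w Submodule.mem_top

/-- Vector version of the type (ii) point set. -/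
private def Xvec (α : Submodule (ZMod 2) V) : Set V :=
  {v : V | v ≠ 0 ∧ Q v = 0 ∧ (v ∉ α ∧ ∀ a ∈ α, polar (⇑Q) a v = 0)}

/-- Vector version of: type (ii) and adjacent to `p`. -/
private def XNvec (α : Submodule (ZMod 2) V) (p : QuadricPoint Q) : Set V :=
  {v : V | v ≠ 0 ∧ Q v = 0 ∧ ((v ∉ α ∧ ∀ a ∈ α, polar (⇑Q) a v = 0) ∧
    p.1.rep ≠ v ∧ polar (⇑Q) p.1.rep v = 0)}

private lemma X_transfer (α : Submodule (ZMod 2) V) (hα : totallySingular Q α) :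
    ({q : QuadricPoint Q | typeII Q α q}).ncard = (Xvec Q α).ncard := by
  rw [show {q : QuadricPoint Q | typeII Q α q}
      = {q : QuadricPoint Q | q.1.rep ∉ α ∧ ∀ a ∈ α, polar (⇑Q) a q.1.rep = 0} by
    ext q; exact typeII_iff Q α hα q]
  rw [ncard_transfer Q (fun v => v ∉ α ∧ ∀ a ∈ α, polar (⇑Q) a v = 0)]
  rfl

private lemma XN_transfer (α : Submodule (ZMod 2) V) (hα : totallySingular Q α)
    (p : QuadricPoint Q) :
    ({q : QuadricPoint Q | typeII Q α q} ∩ (pointGraph Q).neighborSet p).ncard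
      = (XNvec Q α p).ncard := by
  rw [show {q : QuadricPoint Q | typeII Q α q} ∩ (pointGraph Q).neighborSet p
      = {q : QuadricPoint Q | (q.1.rep ∉ α ∧ ∀ a ∈ α, polar (⇑Q) a q.1.rep = 0) ∧
          p.1.rep ≠ q.1.rep ∧ polar (⇑Q) p.1.rep q.1.rep = 0} by
    ext q
    simp only [Set.mem_inter_iff, Set.mem_setOf_eq, SimpleGraph.mem_neighborSet]
    rw [typeII_iff Q α hα, adj_iff]]
  rw [ncard_transfer Q (fun v => (v ∉ α ∧ ∀ a ∈ α, polar (⇑Q) a v = 0) ∧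
    p.1.rep ≠ v ∧ polar (⇑Q) p.1.rep v = 0)]
  rfl

private lemma typeI_all (α : Submodule (ZMod 2) V) (hα : totallySingular Q α)
    (p : QuadricPoint Q) (hp : p.1.rep ∈ α) :
    {q : QuadricPoint Q | typeII Q α q} ∩ (pointGraph Q).neighborSet p
      = {q : QuadricPoint Q | typeII Q α q} := by
  apply Set.inter_eq_left.mpr
  intro q hq
  rw [Set.mem_setOf_eq, typeII_iff Q α hα] at hq
  show (pointGraph Q).Adj p q
  rw [adj_iff]
  exact ⟨fun h => hq.1 (h ▸ hp), hq.2 p.1.rep hp⟩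

private lemma typeIII_half (α : Submodule (ZMod 2) V) (hα : totallySingular Q α)
    (p : QuadricPoint Q) (hp : typeIII Q α p) :
    2 * ({q : QuadricPoint Q | typeII Q α q} ∩ (pointGraph Q).neighborSet p).ncard
      = ({q : QuadricPoint Q | typeII Q α q}).ncard := by
  obtain ⟨hpα, a₀, ha₀, ha₀p⟩ := (typeIII_iff Q α hα p).mp hp
  have ha1 : polar (⇑Q) a₀ p.1.rep = 1 := by
    rcases zmod2_cases (polar (⇑Q) a₀ p.1.rep) with h | h
    · exact absurd h ha₀p
    · exact h
  rw [X_transfer Q α hα, XN_transfer Q α hα p]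
  set S0 : Set V := {v ∈ Xvec Q α | polar (⇑Q) p.1.rep v = 0} with hS0
  set S1 : Set V := {v ∈ Xvec Q α | polar (⇑Q) p.1.rep v = 1} with hS1
  have hXN : XNvec Q α p = S0 := by
    ext v
    simp only [XNvec, Xvec, hS0, Set.mem_setOf_eq]
    constructor
    · rintro ⟨h0, hQ0, hPred, -, hpol⟩
      exact ⟨⟨h0, hQ0, hPred⟩, hpol⟩
    · rintro ⟨⟨h0, hQ0, hPred⟩, hpol⟩
      refine ⟨h0, hQ0, hPred, ?_, hpol⟩
      intro h
      exact ha₀p (by rw [h]; exact hPred.2 a₀ ha₀)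
  have hsplit := ncard_split (Xvec Q α) (fun v => polar (⇑Q) p.1.rep v)
  have hinv : S0.ncard = S1.ncard := by
    apply ncard_invol S0 S1 (fun v => v + a₀)
    · intro x
      rw [add_assoc, add_self_f2, add_zero]
    · rintro v ⟨⟨h0, hQ0, hvα, hperp⟩, hpol⟩
      have hpa : polar (⇑Q) v a₀ = 0 := (polar_comm (⇑Q) v a₀).trans (hperp a₀ ha₀)
      refine ⟨⟨?_, ?_, ?_, ?_⟩, ?_⟩
      · intro h
        have : v = a₀ := by
          have h2 := congrArg (· + a₀) h
          simpa [add_assoc, add_self_f2] using h2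
        exact hvα (this ▸ ha₀)
      · rw [qadd, hQ0, hα a₀ ha₀, hpa]; ring
      · intro h
        have : v ∈ α := by
          have h2 := add_mem h ha₀
          rwa [add_assoc, add_self_f2, add_zero] at h2
        exact hvα this
      · intro a ha
        rw [polar_add_right, hperp a ha, polar_alpha Q hα ha ha₀, add_zero]
      · rw [polar_add_right, hpol, zero_add, polar_comm]
        exact ha1
    · rintro v ⟨⟨h0, hQ0, hvα, hperp⟩, hpol⟩
      have hpa : polar (⇑Q) v a₀ = 0 := (polar_comm (⇑Q) v a₀).trans (hperp a₀ ha₀)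
      refine ⟨⟨?_, ?_, ?_, ?_⟩, ?_⟩
      · intro h
        have hva : v = a₀ := by
          have h2 := congrArg (· + a₀) h
          simpa [add_assoc, add_self_f2] using h2
        exact hvα (hva ▸ ha₀)
      · rw [qadd, hQ0, hα a₀ ha₀, hpa]; ring
      · intro h
        have hin : v ∈ α := by
          have h2 := add_mem h ha₀
          rwa [add_assoc, add_self_f2, add_zero] at h2
        exact hvα hin
      · intro a ha
        rw [polar_add_right, hperp a ha, polar_alpha Q hα ha ha₀, add_zero]
      · rw [polar_add_right, hpol, polar_comm, ha1, one_add_one_zmod2]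
  rw [hXN, hsplit, hinv]
  ring

private lemma typeII_count (hQ : quadricNonsingular Q) (α : Submodule (ZMod 2) V)
    (hα : totallySingular Q α) (p : QuadricPoint Q) (hp : typeII Q α p) :
    4 * ({q : QuadricPoint Q | typeII Q α q} ∩ (pointGraph Q).neighborSet p).ncard + 4
        + ({v : V | ∀ a ∈ α, polar (⇑Q) a v = 0}).ncard
      = 4 * ({q : QuadricPoint Q | typeII Q α q}).ncard := by
  obtain ⟨hpα, hperp⟩ := (typeII_iff Q α hα p).mp hp
  set pr : V := p.1.rep with hpr
  have hpr0 : pr ≠ 0 := p.1.rep_nonzero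
  have hprQ : Q pr = 0 := p.2
  rw [X_transfer Q α hα, XN_transfer Q α hα p]
  set S0 : Set V := {v ∈ Xvec Q α | polar (⇑Q) pr v = 0} with hS0
  set S1 : Set V := {v ∈ Xvec Q α | polar (⇑Q) pr v = 1} with hS1
  -- decomposition of Xvec
  have hsplit : (Xvec Q α).ncard = S0.ncard + S1.ncard :=
    ncard_split (Xvec Q α) (fun v => polar (⇑Q) pr v)
  have hXN : XNvec Q α p = S0 \ {pr} := by
    ext v
    simp only [XNvec, Xvec, hS0, Set.mem_diff, Set.mem_singleton_iff, Set.mem_setOf_eq]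
    constructor
    · rintro ⟨h0, hQ0, hPred, hne, hpol⟩
      exact ⟨⟨⟨h0, hQ0, hPred⟩, hpol⟩, fun h => hne h.symm⟩
    · rintro ⟨⟨⟨h0, hQ0, hPred⟩, hpol⟩, hne⟩
      exact ⟨h0, hQ0, hPred, fun h => hne h.symm, hpol⟩
  have hprS0 : pr ∈ S0 := by
    refine ⟨⟨hpr0, hprQ, hpα, hperp⟩, polar_self_f2 Q pr⟩
  have c1 : (XNvec Q α p).ncard + 1 = S0.ncard := by
    rw [hXN]
    exact Set.ncard_diff_singleton_add_one hprS0 (Set.toFinite _)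
  -- the M set
  set M : Set V := {v : V | (∀ a ∈ α, polar (⇑Q) a v = 0) ∧ polar (⇑Q) pr v = 1} with hM
  have hS1M : S1 = {v ∈ M | Q v = 0} := by
    ext v
    simp only [S1, Xvec, hM, Set.mem_setOf_eq]
    constructor
    · rintro ⟨⟨h0, hQ0, hvα, hv⟩, hpol⟩
      exact ⟨⟨hv, hpol⟩, hQ0⟩
    · rintro ⟨⟨hv, hpol⟩, hQ0⟩
      refine ⟨⟨?_, hQ0, ?_, hv⟩, hpol⟩
      · rintro rfl
        rw [polar_zero_right] at hpol
        exact one_ne_zero hpol.symm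
      · intro hin
        have : polar (⇑Q) pr v = 0 := (polar_comm (⇑Q) pr v).trans (hperp v hin)
        rw [this] at hpol
        exact one_ne_zero hpol.symm
  have hsplitM : M.ncard = ({v ∈ M | Q v = 0}).ncard + ({v ∈ M | Q v = 1}).ncard :=
    ncard_split M (fun v => Q v)
  have hinvM : ({v ∈ M | Q v = 0}).ncard = ({v ∈ M | Q v = 1}).ncard := by
    apply ncard_invol _ _ (fun v => v + pr)
    · intro x
      rw [add_assoc, add_self_f2, add_zero]
    · rintro v ⟨⟨hv, hpol⟩, hQ0⟩
      refine ⟨⟨?_, ?_⟩, ?_⟩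
      · intro a ha
        rw [polar_add_right, hv a ha, hperp a ha, add_zero]
      · rw [polar_add_right, hpol, polar_self_f2, add_zero]
      · rw [qadd, hQ0, hprQ, (polar_comm (⇑Q) v pr).trans hpol]
        decide
    · rintro v ⟨⟨hv, hpol⟩, hQ1⟩
      refine ⟨⟨?_, ?_⟩, ?_⟩
      · intro a ha
        rw [polar_add_right, hv a ha, hperp a ha, add_zero]
      · rw [polar_add_right, hpol, polar_self_f2, add_zero]
      · rw [qadd, hQ1, hprQ, (polar_comm (⇑Q) v pr).trans hpol]
        decide
  -- the T set
  obtain ⟨t, htperp, htpol⟩ := exists_polar_one Q hQ α hα pr hpr0 hprQ hpα hperp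
  set T : Set V := {v : V | ∀ a ∈ α, polar (⇑Q) a v = 0} with hT
  have hsplitT : T.ncard = ({v ∈ T | polar (⇑Q) pr v = 0}).ncard
      + ({v ∈ T | polar (⇑Q) pr v = 1}).ncard :=
    ncard_split T (fun v => polar (⇑Q) pr v)
  have hT1M : {v ∈ T | polar (⇑Q) pr v = 1} = M := rfl
  have hinvT : ({v ∈ T | polar (⇑Q) pr v = 0}).ncard
      = ({v ∈ T | polar (⇑Q) pr v = 1}).ncard := by
    apply ncard_invol _ _ (fun v => v + t)
    · intro x
      rw [add_assoc, add_self_f2, add_zero]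
    · rintro v ⟨hv, hpol⟩
      refine ⟨?_, ?_⟩
      · intro a ha
        rw [polar_add_right, hv a ha, htperp a ha, add_zero]
      · rw [polar_add_right, hpol, htpol, zero_add]
    · rintro v ⟨hv, hpol⟩
      refine ⟨?_, ?_⟩
      · intro a ha
        rw [polar_add_right, hv a ha, htperp a ha, add_zero]
      · rw [polar_add_right, hpol, htpol, one_add_one_zmod2]
  -- put everything together
  rw [hT1M] at hsplitT hinvT
  rw [hS1M] at hsplit
  omega

end Geometry

/- **Statement 8** (main theorem): for a non-singular quadric `Q` in `PG(n,2)` of projective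
index `g ≥ 1` and an `s`-space `α ⊆ Q` with `0 ≤ s < g`, the pair `{X, Y}`, where `X` is the
set of type (ii) points, is a Godsil–McKay partition of the point-graph `Γ`, and the switched
graph is strongly regular with the same parameters as `Γ`. -/
open scoped Classical in
theorem main_GM_partition_and_srg (n g s : ℕ) (hg : 1 ≤ g) (hs : s < g)
    (Q : QuadraticForm (ZMod 2) (Fin (n + 1) → ZMod 2)) (hQ : quadricNonsingular Q)
    (hgi : projIndex Q g)
    (α : Submodule (ZMod 2) (Fin (n + 1) → ZMod 2)) (hα : totallySingular Q α)
    (hαd : Module.finrank (ZMod 2) ↥α = s + 1) :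
    (∃ d : ℕ, ∀ p ∈ {p : QuadricPoint Q | typeII Q α p},
      ({p : QuadricPoint Q | typeII Q α p} ∩ (pointGraph Q).neighborSet p).ncard = d) ∧
    (∀ p ∉ {p : QuadricPoint Q | typeII Q α p},
      ({p : QuadricPoint Q | typeII Q α p} ∩ (pointGraph Q).neighborSet p).ncard = 0 ∨
      halfIn (pointGraph Q) {p : QuadricPoint Q | typeII Q α p} p ∨
      ({p : QuadricPoint Q | typeII Q α p} ∩ (pointGraph Q).neighborSet p).ncard
        = {p : QuadricPoint Q | typeII Q α p}.ncard) ∧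
    ∀ v k l m : ℕ, (pointGraph Q).IsSRGWith v k l m →
      (gmSwitch (pointGraph Q) {p : QuadricPoint Q | typeII Q α p}).IsSRGWith v k l m := by
  classical
  have h1 : ∃ d : ℕ, ∀ p ∈ {p : QuadricPoint Q | typeII Q α p},
      ({p : QuadricPoint Q | typeII Q α p} ∩ (pointGraph Q).neighborSet p).ncard = d := by
    by_cases hex : ∃ p : QuadricPoint Q, typeII Q α p
    · obtain ⟨p₀, hp₀⟩ := hex
      refine ⟨({p : QuadricPoint Q | typeII Q α p} ∩
        (pointGraph Q).neighborSet p₀).ncard, fun p hp => ?_⟩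
      have e1 := typeII_count Q hQ α hα p hp
      have e2 := typeII_count Q hQ α hα p₀ hp₀
      omega
    · exact ⟨0, fun p hp => absurd ⟨p, hp⟩ hex⟩
  have h2 : ∀ p ∉ {p : QuadricPoint Q | typeII Q α p},
      ({p : QuadricPoint Q | typeII Q α p} ∩ (pointGraph Q).neighborSet p).ncard = 0 ∨
      halfIn (pointGraph Q) {p : QuadricPoint Q | typeII Q α p} p ∨
      ({p : QuadricPoint Q | typeII Q α p} ∩ (pointGraph Q).neighborSet p).ncard
        = {p : QuadricPoint Q | typeII Q α p}.ncard := by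
    intro p hp
    by_cases hmem : p.1.rep ∈ α
    · right; right
      rw [typeI_all Q α hα p hmem]
    · right; left
      have hIII : typeIII Q α p := ⟨hmem, fun hts => hp ⟨hmem, hts⟩⟩
      exact typeIII_half Q α hα p hIII
  exact ⟨h1, h2, fun v k l m hsrg => gm_switch_srg (pointGraph Q) _ h1 h2 hsrg⟩
end
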